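/- arXiv:1310.1879 — 7 statements merged into one kernel-verified Lean document; each statement's English description precedes it below -/
import Mathlib

section
/- Let G be a simple graph whose vertex set is partitioned as V = K ∪ I, where K induces a clique of size s in G and I is an independent set in G, and let B be the bipartite graph on the same vertex set whose edge set consists exactly of the edges of G with one endpoint in K and one endpoint in I. Then m(G) = Σ_{k≥0} m_k(B) · m(K_{s−k}), where K_t denotes the complete graph on t vertices. -/
open Classical

/-- The set of matchings of a simple graph `G`: sets of pairwise non-incident edges
(the empty set counts). -/
noncomputable def graphMatchings {V : Type*} [Fintype V] (G : SimpleGraph V) :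
    Finset (Finset (Sym2 V)) :=
  G.edgeFinset.powerset.filter fun M => ∀ e ∈ M, ∀ f ∈ M, e ≠ f → ∀ v : V, v ∈ e → v ∉ f

/-- `m(G)`: the total number of matchings in `G`. -/
noncomputable def mCount {V : Type*} [Fintype V] (G : SimpleGraph V) : ℕ :=
  (graphMatchings G).card

/-- `m_k(G)`: the number of matchings of size `k` in `G`. -/
noncomputable def mkCount {V : Type*} [Fintype V] (G : SimpleGraph V) (k : ℕ) : ℕ :=
  ((graphMatchings G).filter fun M => M.card = k).card

lemma mem_graphMatchings {V : Type*} [Fintype V] {G : SimpleGraph V} {M : Finset (Sym2 V)} :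
    M ∈ graphMatchings G ↔ M ⊆ G.edgeFinset ∧
      ∀ e ∈ M, ∀ f ∈ M, e ≠ f → ∀ v : V, v ∈ e → v ∉ f := by
  simp [graphMatchings, Finset.mem_filter, Finset.mem_powerset]

lemma graphMatchings_map {V W : Type*} [Fintype V] [Fintype W]
    {G : SimpleGraph V} {H : SimpleGraph W} (φ : G ≃g H) {M : Finset (Sym2 V)}
    (hM : M ∈ graphMatchings G) : M.image (Sym2.map φ) ∈ graphMatchings H := by
  rw [mem_graphMatchings] at hM ⊢
  obtain ⟨hsub, hmat⟩ := hM
  constructor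
  · intro e' he'
    rw [Finset.mem_image] at he'
    obtain ⟨e, he, rfl⟩ := he'
    have := hsub he
    rw [SimpleGraph.mem_edgeFinset] at this ⊢
    induction e using Sym2.ind with
    | _ x y =>
      rw [SimpleGraph.mem_edgeSet] at this
      simpa [Sym2.map_pair_eq, SimpleGraph.mem_edgeSet] using φ.map_adj_iff.2 this
  · intro e' he' f' hf' hne v hv hvf
    rw [Finset.mem_image] at he' hf'
    obtain ⟨e, he, rfl⟩ := he'
    obtain ⟨f, hf, rfl⟩ := hf'
    have hef : e ≠ f := by rintro rfl; exact hne rfl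
    rw [Sym2.mem_map] at hv hvf
    obtain ⟨a, ha, rfl⟩ := hv
    obtain ⟨b, hb, hba⟩ := hvf
    have : b = a := φ.toEquiv.injective hba
    subst this
    exact hmat e he f hf hef b ha hb

lemma mCount_iso {V W : Type*} [Fintype V] [Fintype W]
    {G : SimpleGraph V} {H : SimpleGraph W} (φ : G ≃g H) : mCount G = mCount H := by
  unfold mCount
  refine Finset.card_bij' (fun M _ => M.image (Sym2.map φ))
    (fun N _ => N.image (Sym2.map φ.symm))
    (fun M hM => graphMatchings_map φ hM)
    (fun N hN => graphMatchings_map φ.symm hN) ?_ ?_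
  · intro M _
    rw [Finset.image_image]
    have : (Sym2.map ⇑φ.symm ∘ Sym2.map ⇑φ) = id := by
      funext e
      simp [Function.comp, Sym2.map_map]
    rw [this, Finset.image_id]
  · intro N _
    rw [Finset.image_image]
    have : (Sym2.map ⇑φ ∘ Sym2.map ⇑φ.symm) = id := by
      funext e
      simp [Function.comp, Sym2.map_map]
    rw [this, Finset.image_id]

/-- The complete graph on a finset of vertices. -/
def completeOn {V : Type*} [DecidableEq V] (S : Finset V) : SimpleGraph V where
  Adj x y := x ≠ y ∧ x ∈ S ∧ y ∈ S
  symm := by constructor; intro x y ⟨h, hx, hy⟩; exact ⟨h.symm, hy, hx⟩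
  loopless := by constructor; intro x ⟨h, _, _⟩; exact h rfl

lemma completeOn_adj {V : Type*} [DecidableEq V] {S : Finset V} {x y : V} :
    (completeOn S).Adj x y ↔ x ≠ y ∧ x ∈ S ∧ y ∈ S := Iff.rfl

lemma mCount_completeOn {V : Type*} [Fintype V] [DecidableEq V] (S : Finset V) :
    mCount (completeOn S) = mCount (⊤ : SimpleGraph (Fin S.card)) := by
  have h2 : mCount (⊤ : SimpleGraph ↥S) = mCount (⊤ : SimpleGraph (Fin S.card)) :=
    mCount_iso (SimpleGraph.Iso.completeGraph S.equivFin)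
  rw [← h2]
  unfold mCount
  symm
  refine Finset.card_bij (fun N _ => N.image (Sym2.map (Subtype.val : ↥S → V))) ?_ ?_ ?_
  · -- maps into
    intro N hN
    rw [mem_graphMatchings] at hN ⊢
    obtain ⟨hsub, hmat⟩ := hN
    constructor
    · intro e' he'
      rw [Finset.mem_image] at he'
      obtain ⟨e, he, rfl⟩ := he'
      have hE := hsub he
      simp only [SimpleGraph.mem_edgeFinset] at hE ⊢
      induction e using Sym2.ind with
      | _ x y =>
        rw [SimpleGraph.mem_edgeSet, SimpleGraph.top_adj] at hE
        rw [Sym2.map_pair_eq, SimpleGraph.mem_edgeSet]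
        exact ⟨fun h => hE (Subtype.val_injective h), x.2, y.2⟩
    · intro e' he' f' hf' hne v hv hvf
      rw [Finset.mem_image] at he' hf'
      obtain ⟨e, he, rfl⟩ := he'
      obtain ⟨f, hf, rfl⟩ := hf'
      have hef : e ≠ f := by rintro rfl; exact hne rfl
      rw [Sym2.mem_map] at hv hvf
      obtain ⟨a, ha, rfl⟩ := hv
      obtain ⟨b, hb, hba⟩ := hvf
      have : b = a := Subtype.val_injective hba
      subst this
      exact hmat e he f hf hef b ha hb
  · -- injective
    intro N₁ h₁ N₂ h₂ h
    exact Finset.image_injective (Sym2.map.injective Subtype.val_injective) h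
  · -- surjective
    intro M hM
    rw [mem_graphMatchings] at hM
    obtain ⟨hsub, hmat⟩ := hM
    refine ⟨Finset.univ.filter (fun e' : Sym2 ↥S => Sym2.map Subtype.val e' ∈ M), ?_, ?_⟩
    · rw [mem_graphMatchings]
      constructor
      · intro e' he'
        rw [Finset.mem_filter] at he'
        have hE := hsub he'.2
        simp only [SimpleGraph.mem_edgeFinset] at hE ⊢
        induction e' using Sym2.ind with
        | _ x y =>
          rw [Sym2.map_pair_eq, SimpleGraph.mem_edgeSet, completeOn_adj] at hE
          rw [SimpleGraph.mem_edgeSet, SimpleGraph.top_adj]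
          exact fun h => hE.1 (congrArg Subtype.val h)
      · intro e' he' f' hf' hne v hv hvf
        rw [Finset.mem_filter] at he' hf'
        have hne' : Sym2.map Subtype.val e' ≠ Sym2.map Subtype.val f' :=
          fun h => hne (Sym2.map.injective Subtype.val_injective h)
        exact hmat _ he'.2 _ hf'.2 hne' v.val
          (Sym2.mem_map.2 ⟨v, hv, rfl⟩) (Sym2.mem_map.2 ⟨v, hvf, rfl⟩)
    · -- image equals M
      apply Finset.Subset.antisymm
      · intro e' he'
        rw [Finset.mem_image] at he'
        obtain ⟨e, he, rfl⟩ := he'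
        exact (Finset.mem_filter.1 he).2
      · intro e he
        have hedge := hsub he
        simp only [SimpleGraph.mem_edgeFinset] at hedge
        induction e using Sym2.ind with
        | _ x y =>
          rw [SimpleGraph.mem_edgeSet, completeOn_adj] at hedge
          rw [Finset.mem_image]
          refine ⟨s(⟨x, hedge.2.1⟩, ⟨y, hedge.2.2⟩), ?_, by rw [Sym2.map_pair_eq]⟩
          rw [Finset.mem_filter]
          exact ⟨Finset.mem_univ _, by rwa [Sym2.map_pair_eq]⟩

/-- Let `G` be a graph whose vertex set is partitioned as `V = K ∪ I` where `K` induces a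
clique of size `s` and `I` is an independent set, and let `B` be the bipartite graph on the
same vertex set whose edges are exactly the edges of `G` with one endpoint in `K` and one in
`I`.  Then `m(G) = Σ_{k ≥ 0} m_k(B) · m(K_{s-k})`.  (All terms with `k > s` vanish, since a
`k`-matching of `B` uses `k` distinct vertices of `K`, so the sum over `0 ≤ k ≤ s`
captures the full sum.) -/
theorem matchings_clique_indep_decomposition {V : Type*} [Fintype V] [DecidableEq V]
    (G : SimpleGraph V) (K I : Finset V) (hdisj : Disjoint K I) (hcover : K ∪ I = Finset.univ)
    (hK : G.IsClique (K : Set V)) (hI : ∀ x ∈ I, ∀ y ∈ I, ¬ G.Adj x y)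
    (s : ℕ) (hs : K.card = s)
    (B : SimpleGraph V)
    (hB : ∀ x y, B.Adj x y ↔ (G.Adj x y ∧ ((x ∈ K ∧ y ∈ I) ∨ (x ∈ I ∧ y ∈ K)))) :
    mCount G = ∑ k ∈ Finset.range (s + 1),
      mkCount B k * mCount (⊤ : SimpleGraph (Fin (s - k))) := by
  classical
  -- the "cross" predicate: has an endpoint in I
  set p : Sym2 V → Prop := fun e => ∃ v ∈ e, v ∈ I with hp
  -- the K-vertices used by a set of edges
  set T : Finset (Sym2 V) → Finset V := fun Mb => K.filter (fun v => ∃ e ∈ Mb, v ∈ e) with hT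
  have hmemuniv : ∀ v : V, v ∈ K ∨ v ∈ I := by
    intro v
    have : v ∈ K ∪ I := hcover ▸ Finset.mem_univ v
    exact Finset.mem_union.1 this
  have hnotI : ∀ v ∈ K, v ∉ I := fun v hv => Finset.disjoint_left.1 hdisj hv
  have hnotK : ∀ v ∈ I, v ∉ K := fun v hv => Finset.disjoint_right.1 hdisj hv
  -- structure of B-edges
  have hBedge : ∀ e ∈ B.edgeFinset, ∃ x y, e = s(x, y) ∧ x ∈ K ∧ y ∈ I ∧ G.Adj x y := by
    intro e he
    simp only [SimpleGraph.mem_edgeFinset] at he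
    induction e using Sym2.ind with
    | _ x y =>
      rw [SimpleGraph.mem_edgeSet, hB] at he
      obtain ⟨hadj, hc | hc⟩ := he
      · exact ⟨x, y, rfl, hc.1, hc.2, hadj⟩
      · exact ⟨y, x, Sym2.eq_swap, hc.2, hc.1, hadj.symm⟩
  -- the unique K-vertex of a B-edge
  have hKuniq : ∀ e ∈ B.edgeFinset, ∀ v ∈ e, ∀ w ∈ e, v ∈ K → w ∈ K → v = w := by
    intro e he v hv w hw hvK hwK
    obtain ⟨x, y, rfl, hxK, hyI, _⟩ := hBedge e he
    rw [Sym2.mem_iff] at hv hw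
    have hyK := hnotK y hyI
    rcases hv with rfl | rfl
    · rcases hw with rfl | rfl
      · rfl
      · exact absurd hwK hyK
    · exact absurd hvK hyK
  -- every B-edge contains a K-vertex
  have hKex : ∀ e ∈ B.edgeFinset, ∃ v, v ∈ e ∧ v ∈ K := by
    intro e he
    obtain ⟨x, y, rfl, hxK, _, _⟩ := hBedge e he
    exact ⟨x, Sym2.mem_mk_left x y, hxK⟩
  -- card of T Mb for a B-matching
  have hTcard : ∀ Mb ∈ graphMatchings B, (T Mb).card = Mb.card := by
    intro Mb hMb
    rw [mem_graphMatchings] at hMb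
    obtain ⟨hsub, hmat⟩ := hMb
    symm
    refine Finset.card_bij (fun e he => Classical.choose (hKex e (hsub he))) ?_ ?_ ?_
    · intro e he
      obtain ⟨hv, hvK⟩ := Classical.choose_spec (hKex e (hsub he))
      rw [hT]
      simp only [Finset.mem_filter]
      exact ⟨hvK, e, he, hv⟩
    · intro e₁ h₁ e₂ h₂ heq
      obtain ⟨hv₁, _⟩ := Classical.choose_spec (hKex e₁ (hsub h₁))
      obtain ⟨hv₂, _⟩ := Classical.choose_spec (hKex e₂ (hsub h₂))
      by_contra hne
      rw [← heq] at hv₂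
      exact hmat e₁ h₁ e₂ h₂ hne _ hv₁ hv₂
    · intro v hv
      rw [hT] at hv
      simp only [Finset.mem_filter] at hv
      obtain ⟨hvK, e, he, hve⟩ := hv
      refine ⟨e, he, ?_⟩
      obtain ⟨hw, hwK⟩ := Classical.choose_spec (hKex e (hsub he))
      exact hKuniq e (hsub he) _ hw v hve hwK hvK
  have hTsub : ∀ Mb : Finset (Sym2 V), T Mb ⊆ K := fun Mb => Finset.filter_subset _ _
  have hkle : ∀ Mb ∈ graphMatchings B, Mb.card ≤ s := by
    intro Mb hMb
    rw [← hTcard Mb hMb, ← hs]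
    exact Finset.card_le_card (hTsub Mb)
  -- the key bijection
  have key : (graphMatchings G).card =
      ((graphMatchings B).sigma
        (fun Mb => graphMatchings (completeOn (K \ T Mb)))).card := by
    refine Finset.card_bij'
      (fun M _ => ⟨M.filter p, M.filter (fun e => ¬ p e)⟩)
      (fun N _ => N.1 ∪ N.2) ?_ ?_ ?_ ?_
    · -- forward membership
      intro M hM
      rw [mem_graphMatchings] at hM
      obtain ⟨hsub, hmat⟩ := hM
      rw [Finset.mem_sigma]
      constructor
      · -- M.filter p ∈ graphMatchings B
        rw [mem_graphMatchings]
        constructor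
        · intro e he
          rw [Finset.mem_filter] at he
          obtain ⟨heM, hpe⟩ := he
          have hG := hsub heM
          simp only [SimpleGraph.mem_edgeFinset] at hG ⊢
          induction e using Sym2.ind with
          | _ x y =>
            rw [SimpleGraph.mem_edgeSet] at hG ⊢
            rw [hp] at hpe
            simp only [Sym2.mem_iff] at hpe
            obtain ⟨v, (rfl | rfl), hvI⟩ := hpe
            · -- x ∈ I, so y ∈ K
              have hyK : y ∈ K := by
                rcases hmemuniv y with h | h
                · exact h
                · exact absurd hG (hI _ hvI _ h)
              exact (hB _ _).2 ⟨hG, Or.inr ⟨hvI, hyK⟩⟩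
            · -- y ∈ I, so x ∈ K
              have hxK : x ∈ K := by
                rcases hmemuniv x with h | h
                · exact h
                · exact absurd hG (hI _ h _ hvI)
              exact (hB _ _).2 ⟨hG, Or.inl ⟨hxK, hvI⟩⟩
        · intro e he f hf hne v hv hvf
          rw [Finset.mem_filter] at he hf
          exact hmat e he.1 f hf.1 hne v hv hvf
      · -- M.filter ¬p ∈ graphMatchings (completeOn (K \ T (M.filter p)))
        rw [mem_graphMatchings]
        constructor
        · intro e he
          rw [Finset.mem_filter] at he
          obtain ⟨heM, hpe⟩ := he
          have hG := hsub heM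
          simp only [SimpleGraph.mem_edgeFinset] at hG ⊢
          induction e using Sym2.ind with
          | _ x y =>
            rw [SimpleGraph.mem_edgeSet] at hG
            rw [SimpleGraph.mem_edgeSet, completeOn_adj]
            rw [hp] at hpe
            simp only [Sym2.mem_iff] at hpe
            push_neg at hpe
            have hxK : x ∈ K := (hmemuniv x).resolve_right (fun h => hpe x (Or.inl rfl) h)
            have hyK : y ∈ K := (hmemuniv y).resolve_right (fun h => hpe y (Or.inr rfl) h)
            have hnotT : ∀ w, w ∈ s(x, y) → w ∉ T (M.filter p) := by
              intro w hw hwT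
              rw [hT] at hwT
              simp only [Finset.mem_filter] at hwT
              obtain ⟨_, f, hf, hwf⟩ := hwT
              have hne : s(x, y) ≠ f := by
                rintro rfl
                obtain ⟨u, hu, huI⟩ := hf.2
                rw [Sym2.mem_iff] at hu
                rcases hu with rfl | rfl
                · exact hpe _ (Or.inl rfl) huI
                · exact hpe _ (Or.inr rfl) huI
              exact hmat _ heM f hf.1 hne w hw hwf
            refine ⟨hG.ne, ?_, ?_⟩
            · exact Finset.mem_sdiff.2 ⟨hxK, hnotT x (Sym2.mem_mk_left x y)⟩
            · exact Finset.mem_sdiff.2 ⟨hyK, hnotT y (Sym2.mem_mk_right x y)⟩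
        · intro e he f hf hne v hv hvf
          rw [Finset.mem_filter] at he hf
          exact hmat e he.1 f hf.1 hne v hv hvf
    · -- backward membership
      rintro ⟨Mb, Mk⟩ hN
      rw [Finset.mem_sigma] at hN
      obtain ⟨hMb, hMk⟩ := hN
      rw [mem_graphMatchings] at hMb hMk ⊢
      obtain ⟨hsubB, hmatB⟩ := hMb
      obtain ⟨hsubK, hmatK⟩ := hMk
      -- each Mk-vertex is in K \ T Mb
      have hMkvert : ∀ f ∈ Mk, ∀ v ∈ f, v ∈ K \ T Mb := by
        intro f hf v hv
        have := hsubK hf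
        simp only [SimpleGraph.mem_edgeFinset] at this
        induction f using Sym2.ind with
        | _ x y =>
          rw [SimpleGraph.mem_edgeSet, completeOn_adj] at this
          rw [Sym2.mem_iff] at hv
          rcases hv with rfl | rfl
          · exact this.2.1
          · exact this.2.2
      constructor
      · intro e he
        rw [Finset.mem_union] at he
        rcases he with he | he
        · obtain ⟨x, y, rfl, _, _, hadj⟩ := hBedge e (hsubB he)
          simp only [SimpleGraph.mem_edgeFinset, SimpleGraph.mem_edgeSet]
          exact hadj
        · have := hsubK he
          simp only [SimpleGraph.mem_edgeFinset] at this ⊢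
          induction e using Sym2.ind with
          | _ x y =>
            rw [SimpleGraph.mem_edgeSet, completeOn_adj] at this
            rw [SimpleGraph.mem_edgeSet]
            have hx := Finset.mem_sdiff.1 this.2.1
            have hy := Finset.mem_sdiff.1 this.2.2
            exact hK (Finset.mem_coe.2 hx.1) (Finset.mem_coe.2 hy.1) this.1
      · intro e he f hf hne v hv hvf
        rw [Finset.mem_union] at he hf
        -- a vertex shared by an Mb-edge and an Mk-edge: impossible
        have hcrossimp : ∀ e₁ ∈ Mb, ∀ f₁ ∈ Mk, ∀ w, w ∈ e₁ → w ∈ f₁ → False := by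
          intro e₁ he₁ f₁ hf₁ w hw hwf
          have hwK := hMkvert f₁ hf₁ w hwf
          rw [Finset.mem_sdiff] at hwK
          apply hwK.2
          rw [hT]
          simp only [Finset.mem_filter]
          exact ⟨hwK.1, e₁, he₁, hw⟩
        rcases he with he | he <;> rcases hf with hf | hf
        · exact hmatB e he f hf hne v hv hvf
        · exact hcrossimp e he f hf v hv hvf
        · exact hcrossimp f hf e he v hvf hv
        · exact hmatK e he f hf hne v hv hvf
    · -- left inverse
      intro M hM
      simp only []
      rw [Finset.filter_union_filter_not_eq]
    · -- right inverse
      rintro ⟨Mb, Mk⟩ hN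
      rw [Finset.mem_sigma] at hN
      obtain ⟨hMb, hMk⟩ := hN
      rw [mem_graphMatchings] at hMb hMk
      obtain ⟨hsubB, _⟩ := hMb
      obtain ⟨hsubK, _⟩ := hMk
      have hMbp : ∀ e ∈ Mb, p e := by
        intro e he
        obtain ⟨x, y, rfl, _, hyI, _⟩ := hBedge e (hsubB he)
        exact ⟨y, Sym2.mem_mk_right x y, hyI⟩
      have hMknp : ∀ e ∈ Mk, ¬ p e := by
        intro e he hpe
        have hE := hsubK he
        simp only [SimpleGraph.mem_edgeFinset] at hE
        obtain ⟨v, hv, hvI⟩ := hpe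
        induction e using Sym2.ind with
        | _ x y =>
          rw [SimpleGraph.mem_edgeSet, completeOn_adj] at hE
          rw [Sym2.mem_iff] at hv
          rcases hv with rfl | rfl
          · exact hnotI v (Finset.mem_sdiff.1 hE.2.1).1 hvI
          · exact hnotI v (Finset.mem_sdiff.1 hE.2.2).1 hvI
      have h1 : (Mb ∪ Mk).filter p = Mb := by
        rw [Finset.filter_union, Finset.filter_true_of_mem hMbp,
          Finset.filter_false_of_mem hMknp, Finset.union_empty]
      have h2 : (Mb ∪ Mk).filter (fun e => ¬ p e) = Mk := by
        rw [Finset.filter_union, Finset.filter_false_of_mem (fun e he hc => hc (hMbp e he)),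
          Finset.filter_true_of_mem (fun e he => hMknp e he), Finset.empty_union]
      simp only []
      rw [h1, h2]
  -- now count
  rw [mCount, key, Finset.card_sigma]
  have hstep : ∀ Mb ∈ graphMatchings B,
      (graphMatchings (completeOn (K \ T Mb))).card =
        mCount (⊤ : SimpleGraph (Fin (s - Mb.card))) := by
    intro Mb hMb
    have h1 : (K \ T Mb).card = s - Mb.card := by
      rw [Finset.card_sdiff_of_subset (hTsub Mb), hTcard Mb hMb, hs]
    have := mCount_completeOn (K \ T Mb)
    rw [h1] at this
    exact this
  rw [Finset.sum_congr rfl hstep]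
  rw [← Finset.sum_fiberwise_of_maps_to (g := Finset.card) (t := Finset.range (s + 1))
    (fun Mb hMb => Finset.mem_range.2 (Nat.lt_succ_of_le (hkle Mb hMb)))]
  refine Finset.sum_congr rfl ?_
  intro k _
  rw [mkCount]
  rw [Finset.sum_congr rfl (fun Mb hMb => by
    rw [(Finset.mem_filter.1 hMb).2]), Finset.sum_const, smul_eq_mul]
end

section
/- Let G be a bipartite graph with bipartition (X, Y) and let u, v ∈ X. Then for every k ≥ 0, the compressed graph G_{u→v} satisfies m_k(G_{u→v}) ≤ m_k(G). -/
open Classical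

/-- `N_G(x, ȳ)`: the set of vertices other than `x` and `y` adjacent to `x`
but not to `y`. -/
def sideNbhd {V : Type*} (G : SimpleGraph V) (x y : V) : Set V :=
  {v | v ≠ x ∧ v ≠ y ∧ G.Adj x v ∧ ¬ G.Adj y v}

/-- The compression `G_{x→y}` of `G` from `x` to `y`: delete all edges between `x`
and `N_G(x, ȳ)` and add all edges between `y` and `N_G(x, ȳ)`. -/
def compress {V : Type*} (G : SimpleGraph V) (x y : V) : SimpleGraph V :=
  SimpleGraph.fromEdgeSet
    ((G.edgeSet \ {e | ∃ v ∈ sideNbhd G x y, e = s(x, v)}) ∪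
      {e | ∃ v ∈ sideNbhd G x y, e = s(y, v)})

/-- `d₂(G) = Σ_v deg(v)²`. -/
noncomputable def d2 {V : Type*} [Fintype V] (G : SimpleGraph V) : ℕ :=
  ∑ v : V, (G.neighborSet v).ncard ^ 2

/-- The closed neighborhood `N_G[x]`. -/
def closedNbhd {V : Type*} (G : SimpleGraph V) (x : V) : Set V :=
  insert x (G.neighborSet x)

lemma sym2_map_fix {V : Type*} (f : V → V) (e : Sym2 V) (h : ∀ a ∈ e, f a = a) :
    Sym2.map f e = e := by
  induction e using Sym2.ind with
  | _ a b =>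
    rw [Sym2.map_pair_eq, h a (Sym2.mem_mk_left a b), h b (Sym2.mem_mk_right a b)]

lemma compress_edgeSet' {V : Type*} (G : SimpleGraph V) (x y : V) :
    (compress G x y).edgeSet =
      (G.edgeSet \ {e | ∃ w ∈ sideNbhd G x y, e = s(x, w)}) ∪
        {e | ∃ w ∈ sideNbhd G x y, e = s(y, w)} := by
  rw [compress, SimpleGraph.edgeSet_fromEdgeSet]
  ext e
  simp only [Set.mem_diff, Set.mem_union, Set.mem_setOf_eq]
  constructor
  · rintro ⟨h, -⟩; exact h
  · intro h
    refine ⟨h, ?_⟩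
    rcases h with ⟨heG, -⟩ | ⟨w, hw, rfl⟩
    · exact G.not_isDiag_of_mem_edgeSet heG
    · rw [Sym2.mem_diagSet, Sym2.mk_isDiag_iff]
      exact fun h => hw.2.1 h.symm
/-- Let `G` be a bipartite graph with bipartition `(X, Y)` and let `u, v ∈ X`.  Then for
every `k ≥ 0`, the compression `G_{u→v}` satisfies `m_k(G_{u→v}) ≤ m_k(G)`. -/
theorem mk_compress_le_bipartite {V : Type*} [Fintype V] (G : SimpleGraph V) (X Y : Set V)
    (hdisj : Disjoint X Y) (hcover : X ∪ Y = Set.univ)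
    (hbip : ∀ a b, G.Adj a b → (a ∈ X ∧ b ∈ Y) ∨ (a ∈ Y ∧ b ∈ X))
    (u v : V) (hu : u ∈ X) (hv : v ∈ X) (k : ℕ) :
    mkCount (compress G u v) k ≤ mkCount G k := by
  classical
  set S := sideNbhd G u v with hSdef
  have hadjuv : ¬ G.Adj u v := by
    intro h
    rcases hbip u v h with ⟨-, h2⟩ | ⟨h1, -⟩
    · exact Set.disjoint_left.mp hdisj hv h2
    · exact Set.disjoint_left.mp hdisj hu h1
  set τ : V ≃ V := Equiv.swap u v with hτdef
  have hτu : τ u = v := Equiv.swap_apply_left u v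
  have hτv : τ v = u := Equiv.swap_apply_right u v
  have hτo : ∀ a, a ≠ u → a ≠ v → τ a = a := fun a h1 h2 =>
    Equiv.swap_apply_of_ne_of_ne h1 h2
  have hSne : ∀ w ∈ S, w ≠ u ∧ w ≠ v ∧ G.Adj u w ∧ ¬ G.Adj v w := fun w hw => hw
  have hce : ∀ e ∈ (compress G u v).edgeSet,
      (e ∈ G.edgeSet ∧ ∀ w ∈ S, e ≠ s(u, w)) ∨ ∃ w ∈ S, e = s(v, w) := by
    intro e he
    rw [compress_edgeSet'] at he
    rcases he with ⟨h1, h2⟩ | h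
    · exact Or.inl ⟨h1, fun w hw hew => h2 ⟨w, hw, hew⟩⟩
    · exact Or.inr h
  have hnoD : ∀ w ∈ S, s(u, w) ∉ (compress G u v).edgeSet := by
    intro w hw hmem
    rcases hce _ hmem with ⟨-, h2⟩ | ⟨w', hw', heq⟩
    · exact h2 w hw rfl
    · rw [Sym2.eq_iff] at heq
      rcases heq with ⟨h1, h2⟩ | ⟨h1, h2⟩
      · exact (hSne w' hw').2.2.2 (h1 ▸ (hSne w' hw').2.2.1)
      · exact (hSne w' hw').1 h1.symm
  -- the map
  set φ : Finset (Sym2 V) → Finset (Sym2 V) :=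
    fun M => if ∃ w ∈ S, s(v, w) ∈ M then M.image (Sym2.map ⇑τ) else M with hφdef
  -- unpack membership in graphMatchings
  have hunpack : ∀ (H : SimpleGraph V) (M : Finset (Sym2 V)), M ∈ graphMatchings H →
      (∀ e ∈ M, e ∈ H.edgeSet) ∧
        (∀ e ∈ M, ∀ f ∈ M, e ≠ f → ∀ x : V, x ∈ e → x ∉ f) := by
    intro H M hM
    rw [graphMatchings, Finset.mem_filter, Finset.mem_powerset] at hM
    exact ⟨fun e he => SimpleGraph.mem_edgeFinset.mp (hM.1 he), hM.2⟩
  have hpack : ∀ (H : SimpleGraph V) (M : Finset (Sym2 V)),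
      (∀ e ∈ M, e ∈ H.edgeSet) →
      (∀ e ∈ M, ∀ f ∈ M, e ≠ f → ∀ x : V, x ∈ e → x ∉ f) → M ∈ graphMatchings H := by
    intro H M h1 h2
    rw [graphMatchings, Finset.mem_filter, Finset.mem_powerset]
    exact ⟨fun e he => SimpleGraph.mem_edgeFinset.mpr (h1 e he), h2⟩
  -- image of a bad matching lands in G's matchings
  have himg : ∀ M ∈ graphMatchings (compress G u v), ∀ w₀ ∈ S, s(v, w₀) ∈ M →
      ∀ e ∈ M, Sym2.map ⇑τ e ∈ G.edgeSet := by
    intro M hM w₀ hw₀S hw₀M e heM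
    obtain ⟨hsub, hmat⟩ := hunpack _ M hM
    rcases hce e (hsub e heM) with ⟨heG, hnD⟩ | ⟨w, hwS, rfl⟩
    · have hvne : v ∉ e := by
        intro hve
        by_cases hee : e = s(v, w₀)
        · subst hee
          exact (hSne w₀ hw₀S).2.2.2 ((SimpleGraph.mem_edgeSet G).mp heG)
        · exact hmat e heM _ hw₀M hee v hve (Sym2.mem_mk_left v w₀)
      by_cases hue : u ∈ e
      · obtain ⟨z, rfl⟩ := Sym2.mem_iff_exists.mp hue
        have hadj : G.Adj u z := (SimpleGraph.mem_edgeSet G).mp heG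
        have hzu : z ≠ u := fun h => G.irrefl (h ▸ hadj)
        have hzv : z ≠ v := by rintro rfl; exact hadjuv hadj
        have hvz : G.Adj v z := by
          by_contra hvz
          exact hnD z ⟨hzu, hzv, hadj, hvz⟩ rfl
        rw [Sym2.map_pair_eq, hτu, hτo z hzu hzv]
        exact hvz
      · rw [sym2_map_fix]
        · exact heG
        · intro a ha
          exact hτo a (fun h => hue (h ▸ ha)) (fun h => hvne (h ▸ ha))
    · rw [Sym2.map_pair_eq, hτv, hτo w (hSne w hwS).1 (hSne w hwS).2.1]
      exact (hSne w hwS).2.2.1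
  -- φ maps matchings of compress to matchings of G
  have hmaps : ∀ M ∈ graphMatchings (compress G u v), φ M ∈ graphMatchings G := by
    intro M hM
    obtain ⟨hsub, hmat⟩ := hunpack _ M hM
    by_cases hb : ∃ w ∈ S, s(v, w) ∈ M
    · obtain ⟨w₀, hw₀S, hw₀M⟩ := hb
      have hφM : φ M = M.image (Sym2.map ⇑τ) := if_pos ⟨w₀, hw₀S, hw₀M⟩
      rw [hφM]
      apply hpack
      · intro e' he'
        obtain ⟨e, heM, rfl⟩ := Finset.mem_image.mp he'
        exact himg M hM w₀ hw₀S hw₀M e heM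
      · intro e' he' f' hf' hne x hxe hxf
        obtain ⟨e, heM, rfl⟩ := Finset.mem_image.mp he'
        obtain ⟨f, hfM, rfl⟩ := Finset.mem_image.mp hf'
        obtain ⟨a, ha, hfa⟩ := Sym2.mem_map.mp hxe
        obtain ⟨b, hb, hfb⟩ := Sym2.mem_map.mp hxf
        have hab : a = b := τ.injective (hfa.trans hfb.symm)
        have hef : e ≠ f := fun h => hne (h ▸ rfl)
        exact hmat e heM f hfM hef a ha (hab ▸ hb)
    · have hφM : φ M = M := if_neg hb
      rw [hφM]
      apply hpack _ _ _ hmat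
      intro e heM
      rcases hce e (hsub e heM) with ⟨heG, -⟩ | ⟨w, hwS, rfl⟩
      · exact heG
      · exact absurd ⟨w, hwS, heM⟩ hb
  -- φ preserves cardinality
  have hcard : ∀ M : Finset (Sym2 V), (φ M).card = M.card := by
    intro M
    by_cases hb : ∃ w ∈ S, s(v, w) ∈ M
    · rw [hφdef]
      simp only [if_pos hb]
      exact Finset.card_image_of_injective M (Sym2.map.injective τ.injective)
    · rw [hφdef]; simp only [if_neg hb]
  -- detecting which branch was taken from the image
  have hP : ∀ M, (∃ w ∈ S, s(v, w) ∈ M) → ∃ w ∈ S, s(u, w) ∈ φ M := by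
    intro M hb
    obtain ⟨w₀, hw₀S, hw₀M⟩ := hb
    refine ⟨w₀, hw₀S, ?_⟩
    have hφM : φ M = M.image (Sym2.map ⇑τ) := if_pos ⟨w₀, hw₀S, hw₀M⟩
    rw [hφM]
    have : Sym2.map ⇑τ s(v, w₀) = s(u, w₀) := by
      rw [Sym2.map_pair_eq, hτv, hτo w₀ (hSne w₀ hw₀S).1 (hSne w₀ hw₀S).2.1]
    exact this ▸ Finset.mem_image_of_mem _ hw₀M
  have hnP : ∀ M ∈ graphMatchings (compress G u v), (¬ ∃ w ∈ S, s(v, w) ∈ M) →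
      ¬ ∃ w ∈ S, s(u, w) ∈ φ M := by
    intro M hM hb ⟨w, hwS, hwM⟩
    obtain ⟨hsub, -⟩ := hunpack _ M hM
    rw [hφdef] at hwM
    simp only [if_neg hb] at hwM
    exact hnoD w hwS (hsub _ hwM)
  -- injectivity
  have hinj : ∀ M₁ ∈ graphMatchings (compress G u v), ∀ M₂ ∈ graphMatchings (compress G u v),
      φ M₁ = φ M₂ → M₁ = M₂ := by
    intro M₁ h₁ M₂ h₂ heq
    by_cases b₁ : ∃ w ∈ S, s(v, w) ∈ M₁ <;> by_cases b₂ : ∃ w ∈ S, s(v, w) ∈ M₂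
    · have e₁ : φ M₁ = M₁.image (Sym2.map ⇑τ) := if_pos b₁
      have e₂ : φ M₂ = M₂.image (Sym2.map ⇑τ) := if_pos b₂
      rw [e₁, e₂] at heq
      exact Finset.image_injective (Sym2.map.injective τ.injective) heq
    · exact absurd (heq ▸ hP M₁ b₁) (hnP M₂ h₂ b₂)
    · exact absurd (heq ▸ hP M₂ b₂) (hnP M₁ h₁ b₁)
    · have e₁ : φ M₁ = M₁ := if_neg b₁
      have e₂ : φ M₂ = M₂ := if_neg b₂
      rw [e₁, e₂] at heq
      exact heq
  -- conclude
  rw [mkCount, mkCount]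
  apply Finset.card_le_card_of_injOn φ
  · intro M hM
    rw [Finset.mem_coe, Finset.mem_filter] at hM ⊢
    exact ⟨hmaps M hM.1, (hcard M).trans hM.2⟩
  · intro M₁ h₁ M₂ h₂ heq
    rw [Finset.mem_coe, Finset.mem_filter] at h₁ h₂
    exact hinj M₁ h₁.1 M₂ h₂.1 heq
end

section
/- Let G be a bipartite graph with bipartition (X, Y) and let u, v ∈ X. Then the compressed graph G_{u→v} has the same number of edges as G, and d_2(G_{u→v}) ≥ d_2(G). Moreover, if N_G(u) ⊄ N_G(v) and N_G(v) ⊄ N_G(u), then d_2(G_{u→v}) > d_2(G). -/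
open Classical

section Aux
variable {V : Type*} {G : SimpleGraph V} {u v : V}

lemma compress_adj {a b : V} :
    (compress G u v).Adj a b ↔ a ≠ b ∧
      ((G.Adj a b ∧ ¬ ∃ w ∈ sideNbhd G u v, s(a,b) = s(u,w)) ∨
        ∃ w ∈ sideNbhd G u v, s(a,b) = s(v,w)) := by
  rw [compress, SimpleGraph.fromEdgeSet_adj]
  simp only [Set.mem_union, Set.mem_diff, Set.mem_setOf_eq, SimpleGraph.mem_edgeSet]
  tauto

lemma mem_sideNbhd {w : V} :
    w ∈ sideNbhd G u v ↔ w ≠ u ∧ w ≠ v ∧ G.Adj u w ∧ ¬ G.Adj v w := Iff.rfl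

lemma nbhd_compress_u (hne : u ≠ v) (hnadj : ¬ G.Adj u v) :
    (compress G u v).neighborSet u = G.neighborSet u ∩ G.neighborSet v := by
  ext w
  simp only [SimpleGraph.mem_neighborSet, compress_adj, Set.mem_inter_iff, mem_sideNbhd,
    Sym2.eq_iff]
  constructor
  · rintro ⟨hne', (⟨hadj, hA⟩ | ⟨z, ⟨hz1, hz2, hz3, hz4⟩, h⟩)⟩
    · refine ⟨hadj, ?_⟩
      by_contra hvw
      exact hA ⟨w, ⟨(G.ne_of_adj hadj).symm, fun h => (h ▸ hnadj) hadj, hadj, hvw⟩,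
        Or.inl ⟨trivial, rfl⟩⟩
    · rcases h with ⟨h1, h2⟩ | ⟨h1, h2⟩
      · exact absurd h1 hne
      · exact absurd h1.symm hz1
  · rintro ⟨h1, h2⟩
    refine ⟨(G.ne_of_adj h1), Or.inl ⟨h1, ?_⟩⟩
    rintro ⟨z, ⟨hz1, hz2, hz3, hz4⟩, (⟨h3, rfl⟩ | ⟨rfl, rfl⟩)⟩
    · exact hz4 h2
    · exact hz1 rfl

lemma nbhd_compress_v (hne : u ≠ v) (hnadj : ¬ G.Adj u v) :
    (compress G u v).neighborSet v = G.neighborSet u ∪ G.neighborSet v := by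
  ext w
  simp only [SimpleGraph.mem_neighborSet, compress_adj, Set.mem_union, mem_sideNbhd,
    Sym2.eq_iff]
  constructor
  · rintro ⟨hne', (⟨hadj, _⟩ | ⟨z, ⟨hz1, hz2, hz3, hz4⟩, (⟨h3, rfl⟩ | ⟨h1, h2⟩)⟩)⟩
    · exact Or.inr hadj
    · exact Or.inl hz3
    · exact absurd h1.symm hz2
  · rintro (h | h)
    · by_cases hvw : G.Adj v w
      · refine ⟨G.ne_of_adj hvw, Or.inl ⟨hvw, ?_⟩⟩
        rintro ⟨z, ⟨hz1, hz2, hz3, hz4⟩, (⟨h1, h2⟩ | ⟨h1, h2⟩)⟩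
        · exact hne h1.symm
        · exact hz2 h1.symm
      · refine ⟨fun hvw' => hnadj (hvw' ▸ h), Or.inr ⟨w, ⟨(G.ne_of_adj h).symm,
          fun hd => hnadj (hd ▸ h), h, hvw⟩, Or.inl ⟨trivial, rfl⟩⟩⟩
    · refine ⟨G.ne_of_adj h, Or.inl ⟨h, ?_⟩⟩
      rintro ⟨z, ⟨hz1, hz2, hz3, hz4⟩, (⟨h1, h2⟩ | ⟨h1, h2⟩)⟩
      · exact hne h1.symm
      · exact hz2 h1.symm

lemma nbhd_compress_notmem (hne : u ≠ v) {a : V} (hau : a ≠ u) (hav : a ≠ v)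
    (haS : a ∉ sideNbhd G u v) :
    (compress G u v).neighborSet a = G.neighborSet a := by
  ext w
  simp only [SimpleGraph.mem_neighborSet, compress_adj, Sym2.eq_iff]
  constructor
  · rintro ⟨hne', (⟨hadj, _⟩ | ⟨z, hz, (⟨h1, h2⟩ | ⟨h1, h2⟩)⟩)⟩
    · exact hadj
    · exact absurd h1 hav
    · exact absurd (h1 ▸ hz) haS
  · intro h
    refine ⟨G.ne_of_adj h, Or.inl ⟨h, ?_⟩⟩
    rintro ⟨z, hz, (⟨h1, h2⟩ | ⟨h1, h2⟩)⟩
    · exact hau h1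
    · exact haS (h1 ▸ hz)

lemma nbhd_compress_mem (hne : u ≠ v) {a : V} (haS : a ∈ sideNbhd G u v) :
    (compress G u v).neighborSet a = insert v (G.neighborSet a \ {u}) := by
  obtain ⟨ha1, ha2, ha3, ha4⟩ := haS
  ext w
  simp only [SimpleGraph.mem_neighborSet, compress_adj, Sym2.eq_iff, Set.mem_insert_iff,
    Set.mem_diff, Set.mem_singleton_iff]
  constructor
  · rintro ⟨hne', (⟨hadj, hA⟩ | ⟨z, hz, (⟨h1, h2⟩ | ⟨h1, h2⟩)⟩)⟩
    · refine Or.inr ⟨hadj, ?_⟩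
      rintro rfl
      exact hA ⟨a, ⟨ha1, ha2, ha3, ha4⟩, Or.inr ⟨rfl, rfl⟩⟩
    · exact absurd h1 ha2
    · exact Or.inl h2
  · rintro (rfl | ⟨h1, h2⟩)
    · exact ⟨ha2, Or.inr ⟨a, ⟨ha1, ha2, ha3, ha4⟩, Or.inr ⟨rfl, rfl⟩⟩⟩
    · refine ⟨G.ne_of_adj h1, Or.inl ⟨h1, ?_⟩⟩
      rintro ⟨z, hz, (⟨h3, h4⟩ | ⟨h3, h4⟩)⟩
      · exact ha1 h3
      · exact h2 h4

lemma ncard_nbhd_compress_other [Fintype V] (hne : u ≠ v) {a : V} (hau : a ≠ u) (hav : a ≠ v) :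
    ((compress G u v).neighborSet a).ncard = (G.neighborSet a).ncard := by
  by_cases haS : a ∈ sideNbhd G u v
  · rw [nbhd_compress_mem hne haS]
    have hu_mem : u ∈ G.neighborSet a := haS.2.2.1.symm
    have hv_not : v ∉ G.neighborSet a \ {u} := fun h => haS.2.2.2 h.1.symm
    rw [Set.ncard_insert_of_notMem hv_not (Set.toFinite _),
      Set.ncard_diff_singleton_add_one hu_mem (Set.toFinite _)]
  · rw [nbhd_compress_notmem hne hau hav haS]

lemma twice_ncard_edgeSet [Fintype V] (H : SimpleGraph V) :
    2 * H.edgeSet.ncard = ∑ x : V, (H.neighborSet x).ncard := by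
  classical
  have h1 := SimpleGraph.sum_degrees_eq_twice_card_edges H
  have h2 : ∀ x, H.degree x = (H.neighborSet x).ncard := fun x =>
    (Set.ncard_eq_toFinset_card' _).symm
  have h3 : H.edgeSet.ncard = H.edgeFinset.card := Set.ncard_eq_toFinset_card' _
  rw [h3, ← h1]
  exact Finset.sum_congr rfl fun x _ => h2 x

lemma sq_ineq (a b i s : ℕ) (h : i + s = a + b) (ha : i ≤ a) (hb : i ≤ b) :
    a^2 + b^2 ≤ i^2 + s^2 := by
  obtain ⟨c, rfl⟩ := Nat.exists_eq_add_of_le ha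
  obtain ⟨d, rfl⟩ := Nat.exists_eq_add_of_le hb
  have hs : s = i + c + d := by omega
  subst hs; ring_nf; omega

lemma sq_ineq_strict (a b i s : ℕ) (h : i + s = a + b) (ha : i < a) (hb : i < b) :
    a^2 + b^2 < i^2 + s^2 := by
  obtain ⟨c, rfl⟩ := Nat.exists_eq_add_of_le ha.le
  obtain ⟨d, rfl⟩ := Nat.exists_eq_add_of_le hb.le
  have hs : s = i + c + d := by omega
  have hc : 1 ≤ c := by omega
  have hd : 1 ≤ d := by omega
  subst hs; nlinarith

end Aux

/-- Let `G` be a bipartite graph with bipartition `(X, Y)` and `u, v ∈ X`.  Then the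
compression `G_{u→v}` has the same number of edges as `G` and `d₂(G_{u→v}) ≥ d₂(G)`;
moreover if the open neighborhoods `N_G(u)` and `N_G(v)` are incomparable then
`d₂(G_{u→v}) > d₂(G)`. -/
theorem compress_edges_d2_bipartite {V : Type*} [Fintype V] (G : SimpleGraph V) (X Y : Set V)
    (hdisj : Disjoint X Y) (hcover : X ∪ Y = Set.univ)
    (hbip : ∀ a b, G.Adj a b → (a ∈ X ∧ b ∈ Y) ∨ (a ∈ Y ∧ b ∈ X))
    (u v : V) (hu : u ∈ X) (hv : v ∈ X) :
    (compress G u v).edgeSet.ncard = G.edgeSet.ncard ∧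
    d2 G ≤ d2 (compress G u v) ∧
    (¬ G.neighborSet u ⊆ G.neighborSet v → ¬ G.neighborSet v ⊆ G.neighborSet u →
      d2 G < d2 (compress G u v)) := by
  classical
  by_cases hne : u = v
  · subst hne
    have hS : sideNbhd G u u = ∅ := by
      ext w; simp [sideNbhd]
    have hcomp : compress G u u = G := by
      rw [compress, hS]
      simp
    rw [hcomp]
    exact ⟨rfl, le_rfl, fun h1 _ => absurd Set.Subset.rfl h1⟩
  · have hnadj : ¬ G.Adj u v := by
      intro h
      rcases hbip u v h with ⟨h1, h2⟩ | ⟨h1, h2⟩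
      · exact Set.disjoint_left.1 hdisj hv h2
      · exact Set.disjoint_left.1 hdisj hu h1
    set G' := compress G u v with hG'
    have hdu : ((G'.neighborSet u)).ncard = (G.neighborSet u ∩ G.neighborSet v).ncard := by
      rw [hG', nbhd_compress_u hne hnadj]
    have hdv : ((G'.neighborSet v)).ncard = (G.neighborSet u ∪ G.neighborSet v).ncard := by
      rw [hG', nbhd_compress_v hne hnadj]
    have his : (G.neighborSet u ∩ G.neighborSet v).ncard +
        (G.neighborSet u ∪ G.neighborSet v).ncard =
        (G.neighborSet u).ncard + (G.neighborSet v).ncard :=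
      Set.ncard_inter_add_ncard_union _ _ (Set.toFinite _) (Set.toFinite _)
    have hsplit : ∀ (f : V → ℕ), ∑ x : V, f x = ∑ x ∈ Finset.univ \ {u, v}, f x + (f u + f v) := by
      intro f
      rw [← Finset.sum_pair hne]
      exact (Finset.sum_sdiff (Finset.subset_univ _)).symm
    have hother : ∀ x ∈ Finset.univ \ ({u, v} : Finset V),
        ((G'.neighborSet x)).ncard = (G.neighborSet x).ncard := by
      intro x hx
      simp only [Finset.mem_sdiff, Finset.mem_insert, Finset.mem_singleton, not_or] at hx
      exact ncard_nbhd_compress_other hne hx.2.1 hx.2.2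
    have hsum1 : ∑ x : V, (G'.neighborSet x).ncard = ∑ x : V, (G.neighborSet x).ncard := by
      rw [hsplit, hsplit, Finset.sum_congr rfl hother, hdu, hdv, his]
    refine ⟨?_, ?_, ?_⟩
    · have h1 := twice_ncard_edgeSet G'
      have h2 := twice_ncard_edgeSet G
      omega
    · have hcong2 : ∑ x ∈ Finset.univ \ {u, v}, (G'.neighborSet x).ncard ^ 2 =
          ∑ x ∈ Finset.univ \ {u, v}, (G.neighborSet x).ncard ^ 2 :=
        Finset.sum_congr rfl (fun x hx => by rw [hother x hx])
      rw [d2, d2, hsplit, hsplit fun x => (G'.neighborSet x).ncard ^ 2, hcong2, hdu, hdv]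
      have := sq_ineq (G.neighborSet u).ncard (G.neighborSet v).ncard
        (G.neighborSet u ∩ G.neighborSet v).ncard (G.neighborSet u ∪ G.neighborSet v).ncard his
        (Set.ncard_le_ncard Set.inter_subset_left (Set.toFinite _))
        (Set.ncard_le_ncard Set.inter_subset_right (Set.toFinite _))
      omega
    · intro h1 h2
      obtain ⟨w1, hw1, hw1'⟩ := Set.not_subset.mp h1
      obtain ⟨w2, hw2, hw2'⟩ := Set.not_subset.mp h2
      have hia : (G.neighborSet u ∩ G.neighborSet v).ncard < (G.neighborSet u).ncard :=
        Set.ncard_lt_ncard ((Set.ssubset_iff_of_subset Set.inter_subset_left).mpr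
          ⟨w1, hw1, fun h => hw1' h.2⟩) (Set.toFinite _)
      have hib : (G.neighborSet u ∩ G.neighborSet v).ncard < (G.neighborSet v).ncard :=
        Set.ncard_lt_ncard ((Set.ssubset_iff_of_subset Set.inter_subset_right).mpr
          ⟨w2, hw2, fun h => hw2' h.1⟩) (Set.toFinite _)
      have hcong2 : ∑ x ∈ Finset.univ \ {u, v}, (G'.neighborSet x).ncard ^ 2 =
          ∑ x ∈ Finset.univ \ {u, v}, (G.neighborSet x).ncard ^ 2 :=
        Finset.sum_congr rfl (fun x hx => by rw [hother x hx])
      rw [d2, d2, hsplit, hsplit fun x => (G'.neighborSet x).ncard ^ 2, hcong2, hdu, hdv]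
      have := sq_ineq_strict (G.neighborSet u).ncard (G.neighborSet v).ncard
        (G.neighborSet u ∩ G.neighborSet v).ncard (G.neighborSet u ∪ G.neighborSet v).ncard
        his hia hib
      omega
end

section
/- Let 𝒢 be a family of bipartite graphs on a fixed finite vertex set with a fixed bipartition (X, Y) such that for every G′ ∈ 𝒢 and all u, v ∈ X, the compression G′_{u→v} also belongs to 𝒢. If G ∈ 𝒢 satisfies d_2(G) = max{ d_2(G′) : G′ ∈ 𝒢 }, then the open neighborhoods { N_G(u) : u ∈ X } are linearly ordered by inclusion; that is, G is threshold bipartite. -/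
open Classical

/-- Let `𝒢` be a family of bipartite graphs on a fixed finite vertex set with a fixed
bipartition `(X, Y)`, closed under compressions `G'_{u→v}` for `u, v ∈ X`.  If `G ∈ 𝒢`
attains the maximum of `d₂` over `𝒢`, then the open neighborhoods of the vertices of `X`
in `G` are linearly ordered by inclusion, i.e. `G` is threshold bipartite. -/
theorem max_d2_is_threshold_bipartite {V : Type*} [Fintype V] (X Y : Set V)
    (hdisj : Disjoint X Y) (hcover : X ∪ Y = Set.univ)
    (𝒢 : Set (SimpleGraph V))
    (hbip : ∀ G' ∈ 𝒢, ∀ a b : V, G'.Adj a b → (a ∈ X ∧ b ∈ Y) ∨ (a ∈ Y ∧ b ∈ X))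
    (hclosed : ∀ G' ∈ 𝒢, ∀ u ∈ X, ∀ v ∈ X, compress G' u v ∈ 𝒢)
    (G : SimpleGraph V) (hG : G ∈ 𝒢) (hmax : ∀ G' ∈ 𝒢, d2 G' ≤ d2 G) :
    ∀ u ∈ X, ∀ v ∈ X, G.neighborSet u ⊆ G.neighborSet v ∨ G.neighborSet v ⊆ G.neighborSet u := by
  intro u hu v hv
  by_contra hcon
  push_neg at hcon
  obtain ⟨h1, h2⟩ := hcon
  have huv : u ≠ v := by rintro rfl; exact h1 (le_refl _)
  -- u and v are not adjacent since both are in X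
  have hnadj : ¬ G.Adj u v := by
    intro h
    rcases hbip G hG u v h with ⟨_, hvY⟩ | ⟨huY, _⟩
    · exact hdisj.ne_of_mem hv hvY rfl
    · exact hdisj.ne_of_mem hu huY rfl
  set S := sideNbhd G u v with hSdef
  have hSmem : ∀ w, w ∈ S ↔ (w ≠ u ∧ w ≠ v ∧ G.Adj u w ∧ ¬ G.Adj v w) := fun w => Iff.rfl
  have hSeq : S = G.neighborSet u \ G.neighborSet v := by
    ext w
    simp only [hSmem, Set.mem_diff, SimpleGraph.mem_neighborSet]
    constructor
    · rintro ⟨_, _, h3, h4⟩; exact ⟨h3, h4⟩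
    · rintro ⟨h3, h4⟩
      exact ⟨fun hw => G.loopless.irrefl u (hw ▸ h3), fun hw => hnadj (hw ▸ h3), h3, h4⟩
  set H := compress G u v with hHdef
  have hHG : H ∈ 𝒢 := hclosed G hG u hu v hv
  -- adjacency characterization of H
  have hadj : ∀ a b, H.Adj a b ↔
      ((G.Adj a b ∧ ¬ ∃ w ∈ S, s(a,b) = s(u,w)) ∨ ∃ w ∈ S, s(a,b) = s(v,w)) := by
    intro a b
    rw [hHdef]
    constructor
    · intro h
      rcases (SimpleGraph.fromEdgeSet_adj _).1 h with ⟨hmem, hne⟩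
      rcases hmem with ⟨he, hnA⟩ | hB
      · exact Or.inl ⟨he, hnA⟩
      · exact Or.inr hB
    · intro h
      have hne : a ≠ b := by
        rcases h with ⟨hab, _⟩ | ⟨w, hw, hab⟩
        · exact hab.ne
        · rcases Sym2.eq_iff.1 hab with ⟨rfl, rfl⟩ | ⟨rfl, rfl⟩
          · exact fun h' => ((hSmem _).1 hw).2.1 h'.symm
          · exact fun h' => ((hSmem _).1 hw).2.1 h'
      refine (SimpleGraph.fromEdgeSet_adj _).2 ⟨?_, hne⟩
      rcases h with ⟨hab, hnA⟩ | hB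
      · exact Or.inl ⟨hab, hnA⟩
      · exact Or.inr hB
  -- neighbor sets of H
  have hnu : H.neighborSet u = G.neighborSet u ∩ G.neighborSet v := by
    ext x
    simp only [SimpleGraph.mem_neighborSet, hadj, Set.mem_inter_iff]
    constructor
    · rintro (⟨hux, hnA⟩ | ⟨w, hw, hx⟩)
      · by_contra h
        push_neg at h
        have hvx : ¬ G.Adj v x := h hux
        have hxS : x ∈ S := (hSmem x).2 ⟨fun h' => G.loopless.irrefl u (h' ▸ hux),
          fun h' => hnadj (h' ▸ hux), hux, hvx⟩
        exact hnA ⟨x, hxS, rfl⟩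
      · rcases Sym2.eq_iff.1 hx with ⟨rfl, rfl⟩ | ⟨rfl, rfl⟩
        · exact absurd rfl huv
        · exact absurd rfl ((hSmem _).1 hw).1
    · rintro ⟨hux, hvx⟩
      refine Or.inl ⟨hux, ?_⟩
      rintro ⟨w, hw, hx⟩
      rcases Sym2.eq_iff.1 hx with ⟨_, rfl⟩ | ⟨rfl, rfl⟩
      · exact ((hSmem _).1 hw).2.2.2 hvx
      · exact ((hSmem _).1 hw).1 rfl
  have hnv : H.neighborSet v = G.neighborSet v ∪ S := by
    ext x
    simp only [SimpleGraph.mem_neighborSet, hadj, Set.mem_union]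
    constructor
    · rintro (⟨hvx, _⟩ | ⟨w, hw, hx⟩)
      · exact Or.inl hvx
      · rcases Sym2.eq_iff.1 hx with ⟨_, rfl⟩ | ⟨rfl, rfl⟩
        · exact Or.inr hw
        · exact absurd rfl ((hSmem _).1 hw).2.1
    · rintro (hvx | hxS)
      · refine Or.inl ⟨hvx, ?_⟩
        rintro ⟨w, hw, hx⟩
        rcases Sym2.eq_iff.1 hx with ⟨h3, h4⟩ | ⟨h3, h4⟩
        · exact huv h3.symm
        · exact ((hSmem _).1 hw).2.1 h3.symm
      · exact Or.inr ⟨x, hxS, rfl⟩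
  have hno : ∀ x, x ≠ u → x ≠ v → (H.neighborSet x).ncard = (G.neighborSet x).ncard := by
    intro x hxu hxv
    by_cases hxS : x ∈ S
    · -- neighbors of x: lose u, gain v
      have hx : H.neighborSet x = insert v (G.neighborSet x \ {u}) := by
        ext y
        simp only [SimpleGraph.mem_neighborSet, hadj, Set.mem_insert_iff, Set.mem_diff,
          Set.mem_singleton_iff]
        constructor
        · rintro (⟨hxy, hnA⟩ | ⟨w, hw, hy⟩)
          · refine Or.inr ⟨hxy, ?_⟩
            rintro rfl
            exact hnA ⟨x, hxS, Sym2.eq_swap⟩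
          · rcases Sym2.eq_iff.1 hy with ⟨rfl, rfl⟩ | ⟨rfl, rfl⟩
            · exact absurd rfl hxv
            · exact Or.inl rfl
        · rintro (rfl | ⟨hxy, hyu⟩)
          · exact Or.inr ⟨x, hxS, Sym2.eq_swap⟩
          · refine Or.inl ⟨hxy, ?_⟩
            rintro ⟨w, hw, hy⟩
            rcases Sym2.eq_iff.1 hy with ⟨rfl, rfl⟩ | ⟨rfl, rfl⟩
            · exact hxu rfl
            · exact hyu rfl
      rw [hx]
      have hvx : v ∉ G.neighborSet x \ {u} := by
        rintro ⟨hvx, -⟩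
        exact ((hSmem _).1 hxS).2.2.2 (G.adj_symm hvx)
      have hux : u ∈ G.neighborSet x := G.adj_symm ((hSmem _).1 hxS).2.2.1
      rw [Set.ncard_insert_of_notMem hvx (Set.toFinite _),
        Set.ncard_diff_singleton_add_one hux (Set.toFinite _)]
    · have hx : H.neighborSet x = G.neighborSet x := by
        ext y
        simp only [SimpleGraph.mem_neighborSet, hadj]
        constructor
        · rintro (⟨hxy, _⟩ | ⟨w, hw, hy⟩)
          · exact hxy
          · rcases Sym2.eq_iff.1 hy with ⟨h3, h4⟩ | ⟨h3, h4⟩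
            · exact absurd h3 hxv
            · exact absurd (h3 ▸ hw) hxS
        · intro hxy
          refine Or.inl ⟨hxy, ?_⟩
          rintro ⟨w, hw, hy⟩
          rcases Sym2.eq_iff.1 hy with ⟨rfl, rfl⟩ | ⟨rfl, rfl⟩
          · exact hxu rfl
          · exact hxS hw
      rw [hx]
  -- cardinalities
  set du := (G.neighborSet u).ncard with hdu
  set dv := (G.neighborSet v).ncard with hdv
  set s := S.ncard with hs
  set c := (G.neighborSet u ∩ G.neighborSet v).ncard with hc
  have hdusc : du = s + c := by
    have hsplit : G.neighborSet u = S ∪ (G.neighborSet u ∩ G.neighborSet v) := by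
      rw [hSeq, Set.diff_union_inter]
    have hdisj' : Disjoint S (G.neighborSet u ∩ G.neighborSet v) := by
      rw [hSeq]; exact Set.disjoint_sdiff_left.mono_right Set.inter_subset_right
    rw [hdu, hsplit, Set.ncard_union_eq hdisj' (Set.toFinite _) (Set.toFinite _)]
  have hs1 : 1 ≤ s := by
    rw [hs]
    rcases Set.not_subset.1 h1 with ⟨w, hw1, hw2⟩
    have : w ∈ S := by rw [hSeq]; exact ⟨hw1, hw2⟩
    have : S.Nonempty := ⟨w, this⟩
    exact (Set.ncard_pos (Set.toFinite _)).2 this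
  have hcdv : c + 1 ≤ dv := by
    have hss : G.neighborSet u ∩ G.neighborSet v ⊂ G.neighborSet v := by
      refine ⟨Set.inter_subset_right, fun hsub => ?_⟩
      rcases Set.not_subset.1 h2 with ⟨w, hw1, hw2⟩
      exact hw2 (hsub hw1).1
    exact Set.ncard_lt_ncard hss (Set.toFinite _)
  have hnuC : (H.neighborSet u).ncard = c := by rw [hnu]
  have hnvC : (H.neighborSet v).ncard = dv + s := by
    have hdisj' : Disjoint (G.neighborSet v) S := by
      rw [hSeq]; exact Set.disjoint_sdiff_right
    rw [hnv, Set.ncard_union_eq hdisj' (Set.toFinite _) (Set.toFinite _)]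
  -- sum comparison
  have hsum : ∀ (K : SimpleGraph V),
      d2 K = (K.neighborSet u).ncard ^ 2 + ((K.neighborSet v).ncard ^ 2 +
        ∑ x ∈ (Finset.univ.erase u).erase v, (K.neighborSet x).ncard ^ 2) := by
    intro K
    rw [d2, ← Finset.add_sum_erase Finset.univ _ (Finset.mem_univ u),
      ← Finset.add_sum_erase (Finset.univ.erase u) _
        (Finset.mem_erase.2 ⟨huv.symm, Finset.mem_univ v⟩)]
  have htail : ∑ x ∈ (Finset.univ.erase u).erase v, (H.neighborSet x).ncard ^ 2 =
      ∑ x ∈ (Finset.univ.erase u).erase v, (G.neighborSet x).ncard ^ 2 := by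
    apply Finset.sum_congr rfl
    intro x hx
    rcases Finset.mem_erase.1 hx with ⟨hxv, hx'⟩
    rcases Finset.mem_erase.1 hx' with ⟨hxu, -⟩
    rw [hno x hxu hxv]
  have hlt : d2 G < d2 H := by
    rw [hsum G, hsum H, htail, hnuC, hnvC, ← hdu, ← hdv, hdusc]
    have key : (s + c) ^ 2 + dv ^ 2 < c ^ 2 + (dv + s) ^ 2 := by nlinarith
    linarith [key]
  exact absurd (hmax H hHG) (not_le.2 hlt)
end

section
/- Let B be a Young diagram in an ℓ×r frame and let P ∈ B be such that the transpose of B at P is legal. Then m_k(B*_P) = m_k(B) for every k ≥ 0; that is, a legal transpose preserves the number of matchings of every size. -/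
open Classical

/-- `B` is a Young diagram in an `ℓ × r` frame: every box lies in
`{1,…,ℓ} × {1,…,r}`, and boxes are closed under moving up and to the left. -/
def IsYoung (ℓ r : ℕ) (B : Finset (ℕ × ℕ)) : Prop :=
  (∀ p ∈ B, 1 ≤ p.1 ∧ p.1 ≤ ℓ ∧ 1 ≤ p.2 ∧ p.2 ≤ r) ∧
  (∀ p ∈ B, 1 < p.1 → (p.1 - 1, p.2) ∈ B) ∧
  (∀ p ∈ B, 1 < p.2 → (p.1, p.2 - 1) ∈ B)

/-- The matchings of a Young diagram `B`: subsets of `B` in which all first coordinates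
are distinct and all second coordinates are distinct (placements of non-attacking rooks). -/
noncomputable def ydMatchings (B : Finset (ℕ × ℕ)) : Finset (Finset (ℕ × ℕ)) :=
  B.powerset.filter fun M => ∀ p ∈ M, ∀ q ∈ M, p ≠ q → p.1 ≠ q.1 ∧ p.2 ≠ q.2

/-- `m(B)`: the total number of matchings of the Young diagram `B`. -/
noncomputable def ydM (B : Finset (ℕ × ℕ)) : ℕ := (ydMatchings B).card

/-- `m_k(B)`: the number of size-`k` matchings of the Young diagram `B`. -/
noncomputable def ydMk (B : Finset (ℕ × ℕ)) (k : ℕ) : ℕ :=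
  ((ydMatchings B).filter fun M => M.card = k).card

/-- `P` is an out-corner of the Young diagram `B` in the `ℓ × r` frame. -/
def OutCorner (ℓ r : ℕ) (B : Finset (ℕ × ℕ)) (P : ℕ × ℕ) : Prop :=
  P ∈ B ∧ IsYoung ℓ r (B.erase P)

/-- `Q` is an in-corner of the Young diagram `B` in the `ℓ × r` frame. -/
def InCorner (ℓ r : ℕ) (B : Finset (ℕ × ℕ)) (Q : ℕ × ℕ) : Prop :=
  Q ∉ B ∧ IsYoung ℓ r (insert Q B)

/-- The transpose of `B` at `P = (i,j)`:
`B*_P = {(a,b) ∈ B : a < i or b < j} ∪ {(b-j+i, a-i+j) : (a,b) ∈ B, a ≥ i, b ≥ j}`. -/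
noncomputable def transposeAt (B : Finset (ℕ × ℕ)) (i j : ℕ) : Finset (ℕ × ℕ) :=
  B.filter (fun p => p.1 < i ∨ p.2 < j) ∪
    (B.filter fun p => i ≤ p.1 ∧ j ≤ p.2).image fun p => (p.2 - j + i, p.1 - i + j)

namespace TP

noncomputable def injFuns (n : ℕ) (A : Fin n → Finset ℕ) : Finset (Fin n → ℕ) :=
  (Fintype.piFinset A).filter Function.Injective

lemma mem_injFuns {n : ℕ} {A : Fin n → Finset ℕ} {g : Fin n → ℕ} :
    g ∈ injFuns n A ↔ (∀ i, g i ∈ A i) ∧ Function.Injective g := by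
  simp [injFuns, Fintype.mem_piFinset]

lemma injFuns_card : ∀ (n : ℕ) (A : Fin n → Finset ℕ),
    (∀ i k : Fin n, i ≤ k → A i ⊆ A k) →
    (injFuns n A).card = ∏ i : Fin n, ((A i).card - i.val) := by
  intro n
  induction n with
  | zero =>
    intro A _
    rw [Finset.prod_of_isEmpty]
    have : injFuns 0 A = {fun i : Fin 0 => 0} := by
      ext g
      simp only [mem_injFuns, Finset.mem_singleton]
      constructor
      · intro _; funext i; exact absurd i.2 (by omega)
      · rintro rfl
        exact ⟨fun i => absurd i.2 (by omega), fun i => absurd i.2 (by omega)⟩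
    rw [this, Finset.card_singleton]
  | succ n ih =>
    intro A hchain
    have key : injFuns (n+1) A =
        (A 0).biUnion (fun v =>
          (injFuns n (fun i => (A i.succ).erase v)).image (fun h : Fin n → ℕ => (Fin.cons v h : Fin (n+1) → ℕ))) := by
      ext g
      simp only [mem_injFuns, Finset.mem_biUnion, Finset.mem_image]
      constructor
      · rintro ⟨hmem, hinj⟩
        refine ⟨g 0, hmem 0, Fin.tail g, ?_, Fin.cons_self_tail g⟩
        refine ⟨fun i => ?_, fun i i' hii' => ?_⟩
        · rw [Finset.mem_erase]
          exact ⟨fun hh => (Fin.succ_ne_zero i) (hinj hh), hmem i.succ⟩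
        · exact Fin.succ_injective n (hinj hii')
      · rintro ⟨v, hv, h, hh, rfl⟩
        constructor
        · intro i
          refine Fin.cases ?_ ?_ i
          · simpa using hv
          · intro i'
            rw [Fin.cons_succ]
            exact Finset.mem_of_mem_erase (hh.1 i')
        · rw [Fin.cons_injective_iff]
          refine ⟨?_, hh.2⟩
          rintro ⟨i', hi'⟩
          exact (Finset.mem_erase.1 (hh.1 i')).1 hi'
    have hdisj : ∀ v ∈ A 0, ∀ v' ∈ A 0, v ≠ v' →
        Disjoint ((injFuns n (fun i => (A i.succ).erase v)).image (fun h : Fin n → ℕ => (Fin.cons v h : Fin (n+1) → ℕ)))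
          ((injFuns n (fun i => (A i.succ).erase v')).image (fun h : Fin n → ℕ => (Fin.cons v' h : Fin (n+1) → ℕ))) := by
      intro v hv v' hv' hne
      simp only [Finset.disjoint_left]
      intro g hg hg'
      simp only [Finset.mem_image] at hg hg'
      obtain ⟨h1, _, rfl⟩ := hg
      obtain ⟨h2, _, heq⟩ := hg'
      have := congrFun heq 0
      simp only [Fin.cons_zero] at this
      exact hne this.symm
    rw [key, Finset.card_biUnion hdisj]
    have hcardeach : ∀ v ∈ A 0,
          ((injFuns n (fun i => (A i.succ).erase v)).image (fun h : Fin n → ℕ => (Fin.cons v h : Fin (n+1) → ℕ))).card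
            = ∏ i : Fin n, ((A i.succ).card - (i.val + 1)) := by
        intro v hv
        rw [Finset.card_image_of_injective _ (by
          intro h h' hh
          have := congrArg Fin.tail hh
          rwa [Fin.tail_cons, Fin.tail_cons] at this)]
        rw [ih _ (fun i k hik => Finset.erase_subset_erase v (hchain i.succ k.succ (by
          simpa using hik)))]
        apply Finset.prod_congr rfl
        intro i _
        have hvmem : v ∈ A i.succ := hchain 0 i.succ (by simp) hv
        rw [Finset.card_erase_of_mem hvmem]
        omega
    rw [Finset.sum_congr rfl hcardeach, Finset.sum_const, smul_eq_mul,
      Fin.prod_univ_succ]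
    simp
open Finset

noncomputable def colH (B : Finset (ℕ × ℕ)) (b : ℕ) : ℕ := (B.filter fun p => p.2 = b).card

variable {ℓ r : ℕ} {B : Finset (ℕ × ℕ)}

lemma finset_eq_Icc_card (S : Finset ℕ) (h0 : ∀ a ∈ S, 1 ≤ a)
    (hdc : ∀ a ∈ S, ∀ a', 1 ≤ a' → a' ≤ a → a' ∈ S) :
    S = Finset.Icc 1 S.card := by
  have hsub : S ⊆ Finset.Icc 1 S.card := by
    intro m hm
    have h1 : 1 ≤ m := h0 m hm
    have h2 : Finset.Icc 1 m ⊆ S := fun a' ha' => by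
      rw [Finset.mem_Icc] at ha'; exact hdc m hm a' ha'.1 ha'.2
    have := Finset.card_le_card h2
    rw [Nat.card_Icc] at this
    rw [Finset.mem_Icc]
    omega
  exact Finset.eq_of_subset_of_card_le hsub (by simp)

lemma col_down (hB : IsYoung ℓ r B) {b : ℕ} : ∀ a, (a, b) ∈ B → ∀ a', 1 ≤ a' → a' ≤ a → (a', b) ∈ B := by
  intro a
  induction a with
  | zero => intro h a' h1 h2; omega
  | succ n ih =>
    intro h a' h1 h2
    rcases eq_or_lt_of_le h2 with rfl | hlt
    · exact h
    · have hn : (n, b) ∈ B := by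
        have := hB.2.1 (n + 1, b) h (by omega)
        simpa using this
      exact ih hn a' h1 (by omega)

lemma row_down (hB : IsYoung ℓ r B) {a : ℕ} : ∀ b, (a, b) ∈ B → ∀ b', 1 ≤ b' → b' ≤ b → (a, b') ∈ B := by
  intro b
  induction b with
  | zero => intro h b' h1 h2; omega
  | succ n ih =>
    intro h b' h1 h2
    rcases eq_or_lt_of_le h2 with rfl | hlt
    · exact h
    · have hn : (a, n) ∈ B := by
        have := hB.2.2 (a, n + 1) h (by omega)
        simpa using this
      exact ih hn b' h1 (by omega)

lemma mem_iff_colH (hB : IsYoung ℓ r B) (p : ℕ × ℕ) : p ∈ B ↔ 1 ≤ p.1 ∧ p.1 ≤ colH B p.2 := by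
  obtain ⟨a, b⟩ := p
  have hmem : ∀ a', a' ∈ (B.filter fun q => q.2 = b).image Prod.fst ↔ (a', b) ∈ B := by
    intro a'
    simp only [Finset.mem_image, Finset.mem_filter]
    constructor
    · rintro ⟨⟨x, y⟩, ⟨hq, rfl⟩, rfl⟩; exact hq
    · intro h; exact ⟨(a', b), ⟨h, rfl⟩, rfl⟩
  have hcard : ((B.filter fun q => q.2 = b).image Prod.fst).card = colH B b := by
    rw [colH]
    apply Finset.card_image_of_injOn
    intro q hq q' hq' h
    rw [Finset.mem_coe, Finset.mem_filter] at hq hq'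
    exact Prod.ext h (hq.2.trans hq'.2.symm)
  have hS : (B.filter fun q => q.2 = b).image Prod.fst
      = Finset.Icc 1 (((B.filter fun q => q.2 = b).image Prod.fst).card) := by
    apply finset_eq_Icc_card
    · intro a' ha'
      exact (hB.1 _ ((hmem a').1 ha')).1
    · intro a' ha' a'' h1 h2
      exact (hmem a'').2 (col_down hB a' ((hmem a').1 ha') a'' h1 h2)
  rw [hcard] at hS
  constructor
  · intro h
    have h2 : a ∈ (B.filter fun q => q.2 = b).image Prod.fst := (hmem a).2 h
    rw [hS, Finset.mem_Icc] at h2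
    exact h2
  · intro h
    have h2 : a ∈ Finset.Icc 1 (colH B b) := by simpa using h
    rw [← hS] at h2
    exact (hmem a).1 h2

lemma colH_le (hB : IsYoung ℓ r B) (b : ℕ) : colH B b ≤ ℓ := by
  by_cases h : colH B b = 0
  · omega
  · have : (colH B b, b) ∈ B := (mem_iff_colH hB _).2 ⟨by omega, le_refl _⟩
    exact (hB.1 _ this).2.1

lemma colH_anti (hB : IsYoung ℓ r B) {b b' : ℕ} (h1 : 1 ≤ b) (h : b ≤ b') : colH B b' ≤ colH B b := by
  by_cases h0 : colH B b' = 0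
  · omega
  · have hm : (colH B b', b') ∈ B := (mem_iff_colH hB _).2 ⟨by omega, le_refl _⟩
    have : (colH B b', b) ∈ B := row_down hB b' hm b h1 h
    exact ((mem_iff_colH hB _).1 this).2



noncomputable def boardA (ℓ r : ℕ) (B : Finset (ℕ × ℕ)) (x : ℕ) : Fin r → Finset ℕ :=
  fun i => Finset.Icc 1 (colH B (r - i.val)) ∪ Finset.Icc (ℓ + 1) (ℓ + x)

noncomputable def rooks (ℓ r : ℕ) (g : Fin r → ℕ) : Finset (ℕ × ℕ) :=
  (Finset.univ.filter fun i => g i ≤ ℓ).image fun i : Fin r => (g i, r - i.val)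

lemma mem_ydMatchings {B M : Finset (ℕ × ℕ)} :
    M ∈ ydMatchings B ↔ M ⊆ B ∧ ∀ p ∈ M, ∀ q ∈ M, p ≠ q → p.1 ≠ q.1 ∧ p.2 ≠ q.2 := by
  simp [ydMatchings]

lemma boardA_chain (hB : IsYoung ℓ r B) (x : ℕ) :
    ∀ i k : Fin r, i ≤ k → boardA ℓ r B x i ⊆ boardA ℓ r B x k := by
  intro i k hik
  apply Finset.union_subset_union_left
  apply Finset.Icc_subset_Icc_right
  apply colH_anti hB
  · omega
  · have := k.2
    have := i.2
    have : (hik : i ≤ k) → i.val ≤ k.val := fun h => h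
    omega

lemma boardA_card (hB : IsYoung ℓ r B) (x : ℕ) (i : Fin r) :
    (boardA ℓ r B x i).card = colH B (r - i.val) + x := by
  rw [boardA, Finset.card_union_of_disjoint, Nat.card_Icc, Nat.card_Icc]
  · omega
  · rw [Finset.disjoint_left]
    intro a ha ha'
    rw [Finset.mem_Icc] at ha ha'
    have := colH_le hB (r - i.val)
    omega

lemma descF_card (ℓ x t : ℕ) :
    (injFuns t (fun _ => Finset.Icc (ℓ + 1) (ℓ + x))).card = x.descFactorial t := by
  rw [injFuns_card _ _ (fun i k _ => subset_rfl)]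
  rw [Nat.descFactorial_eq_prod_range, ← Fin.prod_univ_eq_prod_range]
  apply Finset.prod_congr rfl
  intro i _
  rw [Nat.card_Icc]
  omega
lemma rooks_maps (hB : IsYoung ℓ r B) (x : ℕ) :
    ∀ g ∈ injFuns r (boardA ℓ r B x), rooks ℓ r g ∈ ydMatchings B := by
  intro g hg
  rw [mem_injFuns] at hg
  obtain ⟨hgA, hginj⟩ := hg
  rw [mem_ydMatchings]
  constructor
  · intro p hp
    rw [rooks, Finset.mem_image] at hp
    obtain ⟨i, hi, rfl⟩ := hp
    rw [Finset.mem_filter] at hi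
    have hAi := hgA i
    rw [boardA, Finset.mem_union, Finset.mem_Icc, Finset.mem_Icc] at hAi
    have hcol : 1 ≤ g i ∧ g i ≤ colH B (r - i.val) := by
      rcases hAi with h | h
      · exact h
      · omega
    exact (mem_iff_colH hB _).2 ⟨hcol.1, hcol.2⟩
  · intro p hp q hq hne
    rw [rooks, Finset.mem_image] at hp hq
    obtain ⟨i, hi, rfl⟩ := hp
    obtain ⟨i', hi', rfl⟩ := hq
    have hii' : i ≠ i' := by rintro rfl; exact hne rfl
    have h1 : g i ≠ g i' := fun h => hii' (hginj h)
    have := i.2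
    have := i'.2
    have h2 : i.val ≠ i'.val := fun h => hii' (Fin.ext h)
    exact ⟨h1, by simp; omega⟩

lemma fiber_card (hB : IsYoung ℓ r B) (x : ℕ) (M : Finset (ℕ × ℕ)) (hM : M ∈ ydMatchings B) :
    ((injFuns r (boardA ℓ r B x)).filter fun g => rooks ℓ r g = M).card
      = x.descFactorial (r - M.card) := by
  rw [mem_ydMatchings] at hM
  obtain ⟨hMB, hMm⟩ := hM
  have hframe : ∀ p ∈ M, 1 ≤ p.1 ∧ p.1 ≤ ℓ ∧ 1 ≤ p.2 ∧ p.2 ≤ r := fun p hp => hB.1 p (hMB hp)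
  -- the columns of M determine their rooks uniquely
  have huniq : ∀ p ∈ M, ∀ q ∈ M, p.2 = q.2 → p = q := by
    intro p hp q hq h
    by_contra hne
    exact (hMm p hp q hq hne).2 h
  set T : Finset (Fin r) := Finset.univ.filter (fun i => ¬ ∃ p ∈ M, p.2 = r - i.val) with hT
  set forced : Fin r → ℕ := fun i => ∑ p ∈ M.filter (fun p => p.2 = r - i.val), p.1 with hforceddef
  have hforced : ∀ (i : Fin r) (p : ℕ × ℕ), p ∈ M → p.2 = r - i.val → forced i = p.1 := by
    intro i p hp hpc
    have hsingle : M.filter (fun q => q.2 = r - i.val) = {p} := by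
      ext q
      rw [Finset.mem_filter, Finset.mem_singleton]
      constructor
      · rintro ⟨hq, hqc⟩; exact huniq q hq p hp (hqc.trans hpc.symm)
      · rintro rfl; exact ⟨hp, hpc⟩
    rw [hforceddef]
    simp [hsingle]
  have hforced_le : ∀ i : Fin r, i ∉ T → forced i ≤ ℓ ∧ 1 ≤ forced i := by
    intro i hi
    rw [hT, Finset.mem_filter, not_and, not_not] at hi
    obtain ⟨p, hp, hpc⟩ := hi (Finset.mem_univ i)
    rw [hforced i p hp hpc]
    exact ⟨(hframe p hp).2.1, (hframe p hp).1⟩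
  have hTc : (Finset.univ.filter (fun i : Fin r => ∃ p ∈ M, p.2 = r - i.val)).card = M.card := by
    apply Finset.card_nbij (i := fun i : Fin r => (forced i, r - i.val))
    · intro i hi
      rw [Finset.mem_coe, Finset.mem_filter] at hi
      obtain ⟨-, p, hp, hpc⟩ := hi
      have h1 := hforced i p hp hpc
      have h2 : (forced i, r - i.val) = p := by
        obtain ⟨p1, p2⟩ := p
        simp only [Prod.mk.injEq]
        exact ⟨h1, hpc.symm⟩
      beta_reduce
      rw [h2]
      exact hp
    · intro i hi i' hi' h
      have h2 := congrArg Prod.snd h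
      simp only at h2
      have := i.2
      have := i'.2
      exact Fin.ext (by omega)
    · intro p hp
      rw [Finset.mem_coe] at hp
      have hpf := hframe p hp
      refine ⟨⟨r - p.2, by omega⟩, ?_, ?_⟩
      · rw [Finset.mem_coe, Finset.mem_filter]
        exact ⟨Finset.mem_univ _, p, hp, by simp; omega⟩
      · have hc : p.2 = r - (⟨r - p.2, by omega⟩ : Fin r).val := by simp; omega
        have h1 := hforced ⟨r - p.2, by omega⟩ p hp hc
        obtain ⟨p1, p2⟩ := p
        simp only [Prod.mk.injEq]
        refine ⟨h1, ?_⟩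
        simp only at hpf ⊢
        omega
  have hTcard : T.card = r - M.card := by
    have := Finset.card_filter_add_card_filter_not
      (s := (Finset.univ : Finset (Fin r))) (p := fun i : Fin r => ∃ p ∈ M, p.2 = r - i.val)
    rw [hTc] at this
    simp only [Finset.card_univ, Fintype.card_fin] at this
    rw [hT]
    omega
  set e : Fin (r - M.card) → {i // i ∈ T} := fun m => T.equivFin.symm (Fin.cast hTcard.symm m) with he_def
  set e' : {i // i ∈ T} → Fin (r - M.card) := fun i => Fin.cast hTcard (T.equivFin i) with he'_def
  have he1 : ∀ m, e' (e m) = m := by intro m; simp [he_def, he'_def]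
  have he2 : ∀ i, e (e' i) = i := by intro i; simp [he_def, he'_def]
  rw [← descF_card ℓ x (r - M.card)]
  apply Finset.card_nbij' (i := fun (g : Fin r → ℕ) (m : Fin (r - M.card)) => g (e m).val)
    (j := fun (h : Fin (r - M.card) → ℕ) (i : Fin r) =>
      if hi : i ∈ T then h (e' ⟨i, hi⟩) else forced i)
  · -- forward membership
    intro g hg
    rw [Finset.mem_coe, Finset.mem_filter, mem_injFuns] at hg
    obtain ⟨⟨hgA, hginj⟩, hgf⟩ := hg
    have hgT : ∀ i : Fin r, i ∈ T → g i ∈ Finset.Icc (ℓ + 1) (ℓ + x) := by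
      intro i hi
      have hle : ¬ g i ≤ ℓ := by
        intro hle
        rw [hT, Finset.mem_filter] at hi
        apply hi.2
        refine ⟨(g i, r - i.val), ?_, rfl⟩
        rw [← hgf, rooks, Finset.mem_image]
        exact ⟨i, by rw [Finset.mem_filter]; exact ⟨Finset.mem_univ _, hle⟩, rfl⟩
      have := hgA i
      rw [boardA, Finset.mem_union] at this
      rcases this with h | h
      · rw [Finset.mem_Icc] at h
        have := colH_le hB (r - i.val)
        omega
      · exact h
    rw [Finset.mem_coe, mem_injFuns]
    constructor
    · intro m
      exact hgT (e m).val (e m).2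
    · intro m m' hmm'
      have : (e m).val = (e m').val := hginj hmm'
      have : e m = e m' := Subtype.ext this
      rw [← he1 m, ← he1 m', this]
  · -- backward membership
    intro h hh
    rw [Finset.mem_coe, mem_injFuns] at hh
    obtain ⟨hhE, hhinj⟩ := hh
    rw [Finset.mem_coe, Finset.mem_filter, mem_injFuns]
    have hval : ∀ i : Fin r, (if hi : i ∈ T then h (e' ⟨i, hi⟩) else forced i) ∈ boardA ℓ r B x i := by
      intro i
      by_cases hi : i ∈ T
      · rw [dif_pos hi, boardA]
        exact Finset.mem_union_right _ (hhE _)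
      · rw [dif_neg hi, boardA]
        apply Finset.mem_union_left
        rw [Finset.mem_Icc]
        have hi' := hi
        rw [hT, Finset.mem_filter, not_and, not_not] at hi'
        obtain ⟨p, hp, hpc⟩ := hi' (Finset.mem_univ i)
        rw [hforced i p hp hpc]
        have := (mem_iff_colH hB p).1 (hMB hp)
        rw [hpc] at this
        exact this
    have hEbig : ∀ m, ℓ + 1 ≤ h m := by
      intro m
      have := hhE m
      rw [Finset.mem_Icc] at this
      exact this.1
    have hinj : Function.Injective (fun i : Fin r =>
        if hi : i ∈ T then h (e' ⟨i, hi⟩) else forced i) := by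
      intro i i' hii'
      simp only at hii'
      by_cases hi : i ∈ T <;> by_cases hi' : i' ∈ T
      · rw [dif_pos hi, dif_pos hi'] at hii'
        have h1 := hhinj hii'
        have h2 := congrArg e h1
        rw [he2, he2] at h2
        exact Subtype.ext_iff.1 h2
      · rw [dif_pos hi, dif_neg hi'] at hii'
        have h1 := hEbig (e' ⟨i, hi⟩)
        have h2 := (hforced_le i' hi').1
        omega
      · rw [dif_neg hi, dif_pos hi'] at hii'
        have h1 := hEbig (e' ⟨i', hi'⟩)
        have h2 := (hforced_le i hi).1
        omega
      · rw [dif_neg hi, dif_neg hi'] at hii'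
        by_contra hne
        have hii : i.val ≠ i'.val := fun hc => hne (Fin.ext hc)
        rw [hT, Finset.mem_filter, not_and, not_not] at hi hi'
        obtain ⟨p, hp, hpc⟩ := hi (Finset.mem_univ i)
        obtain ⟨p', hp', hpc'⟩ := hi' (Finset.mem_univ i')
        rw [hforced i p hp hpc, hforced i' p' hp' hpc'] at hii'
        have hpp' : p ≠ p' := by
          intro hc
          rw [hc] at hpc
          have := i.2
          have := i'.2
          rw [hpc'] at hpc
          omega
        exact (hMm p hp p' hp' hpp').1 hii'
    refine ⟨⟨hval, hinj⟩, ?_⟩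
    -- rooks of the reconstructed function is M
    ext q
    rw [rooks, Finset.mem_image]
    constructor
    · rintro ⟨i, hi, rfl⟩
      rw [Finset.mem_filter] at hi
      obtain ⟨-, hile⟩ := hi
      by_cases hiT : i ∈ T
      · beta_reduce at hile ⊢
        rw [dif_pos hiT] at hile ⊢
        have := hEbig (e' ⟨i, hiT⟩)
        omega
      · beta_reduce at hile ⊢
        rw [dif_neg hiT] at hile ⊢
        have hi' := hiT
        rw [hT, Finset.mem_filter, not_and, not_not] at hi'
        obtain ⟨p, hp, hpc⟩ := hi' (Finset.mem_univ i)
        rw [hforced i p hp hpc]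
        have : (p.1, r - i.val) = p := by rw [← hpc]
        rw [this]
        exact hp
    · intro hq
      have hqf := hframe q hq
      refine ⟨⟨r - q.2, by omega⟩, ?_, ?_⟩
      · have hiT : (⟨r - q.2, by omega⟩ : Fin r) ∉ T := by
          rw [hT, Finset.mem_filter, not_and, not_not]
          intro _
          exact ⟨q, hq, by simp; omega⟩
        rw [Finset.mem_filter]
        beta_reduce
        rw [dif_neg hiT]
        refine ⟨Finset.mem_univ _, ?_⟩
        rw [hforced _ q hq (by simp; omega)]
        omega
      · have hiT : (⟨r - q.2, by omega⟩ : Fin r) ∉ T := by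
          rw [hT, Finset.mem_filter, not_and, not_not]
          intro _
          exact ⟨q, hq, by simp; omega⟩
        beta_reduce
        rw [dif_neg hiT, hforced _ q hq (by simp; omega)]
        obtain ⟨q1, q2⟩ := q
        simp only [Prod.mk.injEq, true_and]
        show r - (r - q2) = q2
        simp only at hqf
        omega
  · -- left inverse
    intro g hg
    rw [Finset.mem_coe, Finset.mem_filter, mem_injFuns] at hg
    obtain ⟨⟨hgA, hginj⟩, hgf⟩ := hg
    funext i
    beta_reduce
    by_cases hi : i ∈ T
    · rw [dif_pos hi]
      show g (e (e' ⟨i, hi⟩)).val = g i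
      rw [he2 ⟨i, hi⟩]
    · rw [dif_neg hi]
      have hi' := hi
      rw [hT, Finset.mem_filter, not_and, not_not] at hi'
      obtain ⟨p, hp, hpc⟩ := hi' (Finset.mem_univ i)
      have hpM := hp
      rw [← hgf, rooks, Finset.mem_image] at hp
      obtain ⟨i', hi'f, hpi'⟩ := hp
      rw [Finset.mem_filter] at hi'f
      have hieq : i' = i := by
        have := congrArg Prod.snd hpi'
        simp only at this
        rw [hpc] at this
        have := i.2
        have := i'.2
        exact Fin.ext (by omega)
      rw [hieq] at hpi'
      rw [hforced i p hpM hpc, ← hpi']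
  · -- right inverse
    intro h hh
    funext m
    show (if hi : (e m).val ∈ T then h (e' ⟨(e m).val, hi⟩) else forced (e m).val) = h m
    rw [dif_pos (e m).2, Subtype.coe_eta, he1]
lemma count_sum (hB : IsYoung ℓ r B) (x : ℕ) :
    ∑ M ∈ ydMatchings B, x.descFactorial (r - M.card)
      = ∏ i : Fin r, (colH B (r - i.val) + x - i.val) := by
  have h1 := Finset.card_eq_sum_card_fiberwise (rooks_maps hB x)
  rw [injFuns_card _ _ (boardA_chain hB x)] at h1
  rw [Finset.sum_congr rfl (fun M hM => fiber_card hB x M hM)] at h1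
  rw [← h1]
  apply Finset.prod_congr rfl
  intro i _
  rw [boardA_card hB x i]

lemma count_sum' (hB : IsYoung ℓ r B) (y : ℕ) :
    ∑ M ∈ ydMatchings B, (y + r).descFactorial (r - M.card)
      = ∏ b ∈ Finset.Icc 1 r, (y + (colH B b + b)) := by
  rw [count_sum hB (y + r)]
  refine Finset.prod_bij' (fun (i : Fin r) (_ : i ∈ Finset.univ) => r - i.val)
    (fun b hb => (⟨r - b, by rw [Finset.mem_Icc] at hb; omega⟩ : Fin r)) ?_ ?_ ?_ ?_ ?_
  · intro i _
    show r - i.val ∈ Finset.Icc 1 r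
    rw [Finset.mem_Icc]
    have := i.2
    omega
  · intro b _
    exact Finset.mem_univ _
  · intro i _
    have := i.2
    exact Fin.ext (by simp; omega)
  · intro b hb
    show r - ((⟨r - b, _⟩ : Fin r) : ℕ) = b
    rw [Finset.mem_Icc] at hb
    simp
    omega
  · intro i _
    show colH B (r - i.val) + (y + r) - i.val = y + (colH B (r - i.val) + (r - i.val))
    have := i.2
    generalize colH B (r - i.val) = c
    omega

lemma top_of_col (hB : IsYoung ℓ r B) {a b : ℕ} (hab : (a, b) ∈ B) (h1 : (a + 1, b) ∉ B) :
    colH B b = a := by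
  have h2 := (mem_iff_colH hB (a, b)).1 hab
  simp only at h2
  by_contra hne
  have h3 : (a + 1, b) ∈ B := (mem_iff_colH hB (a + 1, b)).2 (by simp; omega)
  exact h1 h3

lemma colH_erase_self {a b : ℕ} (hab : (a, b) ∈ B) :
    colH (B.erase (a, b)) b = colH B b - 1 := by
  rw [colH, colH, Finset.filter_erase, Finset.card_erase_of_mem]
  rw [Finset.mem_filter]
  exact ⟨hab, rfl⟩

lemma colH_erase_ne {a b b' : ℕ} (hne : b' ≠ b) :
    colH (B.erase (a, b)) b' = colH B b' := by
  rw [colH, colH, Finset.filter_erase, Finset.erase_eq_of_notMem]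
  rw [Finset.mem_filter]
  rintro ⟨-, h⟩
  exact hne h.symm

lemma young_erase (hB : IsYoung ℓ r B) {a b : ℕ} (h1 : (a + 1, b) ∉ B) (h2 : (a, b + 1) ∉ B) :
    IsYoung ℓ r (B.erase (a, b)) := by
  refine ⟨fun p hp => hB.1 p (Finset.mem_of_mem_erase hp), ?_, ?_⟩
  · intro p hp hgt
    rw [Finset.mem_erase] at hp ⊢
    refine ⟨?_, hB.2.1 p hp.2 hgt⟩
    intro hc
    apply h1
    obtain ⟨p1, p2⟩ := p
    simp only [Prod.mk.injEq] at hc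
    have : (p1, p2) = (a + 1, b) := by
      simp only [Prod.mk.injEq]
      simp only at hgt
      omega
    rw [← this]
    exact hp.2
  · intro p hp hgt
    rw [Finset.mem_erase] at hp ⊢
    refine ⟨?_, hB.2.2 p hp.2 hgt⟩
    intro hc
    apply h2
    obtain ⟨p1, p2⟩ := p
    simp only [Prod.mk.injEq] at hc
    have : (p1, p2) = (a, b + 1) := by
      simp only [Prod.mk.injEq]
      simp only at hgt
      omega
    rw [← this]
    exact hp.2

lemma transposeAt_erase {i j a b : ℕ} {B : Finset (ℕ × ℕ)} (hia : i ≤ a) (hjb : j ≤ b) :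
    transposeAt (B.erase (a, b)) i j = (transposeAt B i j).erase (b - j + i, a - i + j) := by
  ext ⟨u, v⟩
  simp only [transposeAt, Finset.mem_union, Finset.mem_filter, Finset.mem_erase,
    Finset.mem_image, Prod.mk.injEq, ne_eq, Prod.ext_iff]
  constructor
  · rintro (⟨⟨hne, hBm⟩, hor⟩ | ⟨⟨p1, p2⟩, ⟨⟨hne, hpB⟩, hpi, hpj⟩, hu, hv⟩)
    · refine ⟨?_, Or.inl ⟨hBm, hor⟩⟩
      omega
    · refine ⟨?_, Or.inr ⟨(p1, p2), ⟨hpB, hpi, hpj⟩, hu, hv⟩⟩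
      simp only at hne hu hv hpi hpj ⊢
      omega
  · rintro ⟨hne, (⟨hBm, hor⟩ | ⟨⟨p1, p2⟩, ⟨hpB, hpi, hpj⟩, hu, hv⟩)⟩
    · refine Or.inl ⟨⟨?_, hBm⟩, hor⟩
      omega
    · refine Or.inr ⟨(p1, p2), ⟨⟨?_, hpB⟩, hpi, hpj⟩, hu, hv⟩
      simp only at hne hu hv hpi hpj ⊢
      omega

lemma transposeAt_self {i j : ℕ} (hij : (i, j) ∈ B)
    (hsingle : ∀ p ∈ B, i ≤ p.1 → j ≤ p.2 → p = (i, j)) :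
    transposeAt B i j = B := by
  ext ⟨u, v⟩
  simp only [transposeAt, Finset.mem_union, Finset.mem_filter, Finset.mem_image]
  constructor
  · rintro (⟨hBm, -⟩ | ⟨⟨p1, p2⟩, ⟨hpB, hpi, hpj⟩, heq⟩)
    · exact hBm
    · have hp := hsingle (p1, p2) hpB hpi hpj
      simp only [Prod.mk.injEq] at hp heq
      have : u = i ∧ v = j := by omega
      rw [this.1, this.2]
      exact hij
  · intro h
    by_cases hc : u < i ∨ v < j
    · exact Or.inl ⟨h, hc⟩
    · have hp := hsingle (u, v) h (by omega) (by omega)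
      simp only [Prod.mk.injEq] at hp
      refine Or.inr ⟨(i, j), ⟨hij, le_refl _, le_refl _⟩, ?_⟩
      simp only [Prod.mk.injEq]
      omega

lemma map_split (s : Finset ℕ) {b : ℕ} (hb : b ∈ s) (f : ℕ → ℕ) :
    s.val.map f = f b ::ₘ (s.erase b).val.map f := by
  have h1 : s.val = b ::ₘ (s.erase b).val := by
    rw [Finset.erase_val, Multiset.cons_erase]
    exact hb
  rw [h1, Multiset.map_cons]

lemma MS_trans {i j : ℕ} : ∀ (n : ℕ) (B : Finset (ℕ × ℕ)),
    (B.filter (fun p => i ≤ p.1 ∧ j ≤ p.2)).card = n →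
    IsYoung ℓ r B → (i, j) ∈ B → IsYoung ℓ r (transposeAt B i j) →
    ((Finset.Icc 1 r).val.map fun b => colH B b + b)
      = ((Finset.Icc 1 r).val.map fun b => colH (transposeAt B i j) b + b) := by
  intro n
  induction n using Nat.strong_induction_on with
  | _ n ih =>
    intro B hcard hB hij hlegal
    have hijQ : (i, j) ∈ B.filter (fun p => i ≤ p.1 ∧ j ≤ p.2) := by
      rw [Finset.mem_filter]
      exact ⟨hij, le_refl _, le_refl _⟩
    by_cases hn : n ≤ 1
    · -- base case : quadrant is a singleton
      have hsingle : ∀ p ∈ B, i ≤ p.1 → j ≤ p.2 → p = (i, j) := by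
        intro p hp hpi hpj
        have hpQ : p ∈ B.filter (fun p => i ≤ p.1 ∧ j ≤ p.2) := by
          rw [Finset.mem_filter]; exact ⟨hp, hpi, hpj⟩
        have := Finset.card_le_one.1 (by omega : (B.filter (fun p => i ≤ p.1 ∧ j ≤ p.2)).card ≤ 1)
        exact this p hpQ (i, j) hijQ
      rw [transposeAt_self hij hsingle]
    · -- inductive step : find a corner of the quadrant other than (i,j)
      have hne : (B.filter (fun p => i ≤ p.1 ∧ j ≤ p.2)).erase (i, j) ≠ ∅ := by
        intro hc
        have h2 := Finset.card_erase_of_mem hijQ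
        rw [hc] at h2
        simp at h2
        omega
      obtain ⟨p0, hp0, hmax⟩ := Finset.exists_max_image _ (fun p => p.1 + p.2)
        (Finset.nonempty_of_ne_empty hne)
      rw [Finset.mem_erase, Finset.mem_filter] at hp0
      obtain ⟨hp0ne, hp0B, hp0i, hp0j⟩ := hp0
      obtain ⟨a, b⟩ := p0
      simp only at hp0i hp0j
      have hia : i ≤ a := hp0i
      have hjb : j ≤ b := hp0j
      -- corner properties
      have h1 : (a + 1, b) ∉ B := by
        intro hc
        have hm : (a + 1, b) ∈ (B.filter (fun p => i ≤ p.1 ∧ j ≤ p.2)).erase (i, j) := by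
          rw [Finset.mem_erase, Finset.mem_filter]
          refine ⟨?_, hc, by omega, by omega⟩
          simp only [ne_eq, Prod.mk.injEq]
          omega
        have := hmax _ hm
        simp only at this
        omega
      have h2 : (a, b + 1) ∉ B := by
        intro hc
        have hm : (a, b + 1) ∈ (B.filter (fun p => i ≤ p.1 ∧ j ≤ p.2)).erase (i, j) := by
          rw [Finset.mem_erase, Finset.mem_filter]
          refine ⟨?_, hc, by omega, by omega⟩
          simp only [ne_eq, Prod.mk.injEq]
          omega
        have := hmax _ hm
        simp only at this
        omega
      -- frame facts
      have hfij := hB.1 (i, j) hij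
      simp only at hfij
      have hfab := hB.1 (a, b) hp0B
      simp only at hfab
      -- the transposed cell
      have hcellT : (b - j + i, a - i + j) ∈ transposeAt B i j := by
        rw [transposeAt, Finset.mem_union]
        refine Or.inr ?_
        rw [Finset.mem_image]
        exact ⟨(a, b), by rw [Finset.mem_filter]; exact ⟨hp0B, hia, hjb⟩, rfl⟩
      have hfcell := hlegal.1 _ hcellT
      simp only at hfcell
      -- corner properties of the transposed cell
      have hc1 : (b - j + i + 1, a - i + j) ∉ transposeAt B i j := by
        intro hc
        rw [transposeAt, Finset.mem_union, Finset.mem_filter, Finset.mem_image] at hc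
        rcases hc with ⟨-, hor⟩ | ⟨⟨q1, q2⟩, hq, heq⟩
        · omega
        · rw [Finset.mem_filter] at hq
          simp only [Prod.mk.injEq] at heq hq
          have : (q1, q2) = (a, b + 1) := by
            simp only [Prod.mk.injEq]
            omega
          rw [this] at hq
          exact h2 hq.1
      have hc2 : (b - j + i, a - i + j + 1) ∉ transposeAt B i j := by
        intro hc
        rw [transposeAt, Finset.mem_union, Finset.mem_filter, Finset.mem_image] at hc
        rcases hc with ⟨-, hor⟩ | ⟨⟨q1, q2⟩, hq, heq⟩
        · omega
        · rw [Finset.mem_filter] at hq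
          simp only [Prod.mk.injEq] at heq hq
          have : (q1, q2) = (a + 1, b) := by
            simp only [Prod.mk.injEq]
            omega
          rw [this] at hq
          exact h1 hq.1
      -- the erased diagram
      have hYB' : IsYoung ℓ r (B.erase (a, b)) := young_erase hB h1 h2
      have hijB' : (i, j) ∈ B.erase (a, b) := by
        rw [Finset.mem_erase]
        exact ⟨fun hc => hp0ne (by rw [hc]), hij⟩
      have htr : transposeAt (B.erase (a, b)) i j
          = (transposeAt B i j).erase (b - j + i, a - i + j) := transposeAt_erase hia hjb
      have hYB'T : IsYoung ℓ r (transposeAt (B.erase (a, b)) i j) := by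
        rw [htr]
        exact young_erase hlegal hc1 hc2
      have hcard' : ((B.erase (a, b)).filter (fun p => i ≤ p.1 ∧ j ≤ p.2)).card = n - 1 := by
        rw [Finset.filter_erase, Finset.card_erase_of_mem]
        · rw [hcard]
        · rw [Finset.mem_filter]
          exact ⟨hp0B, hia, hjb⟩
      have hIH := ih (n - 1) (by omega) (B.erase (a, b)) hcard' hYB' hijB' hYB'T
      -- column heights at the special columns
      have htopB : colH B b = a := top_of_col hB hp0B h1
      have htopT : colH (transposeAt B i j) (a - i + j) = b - j + i :=
        top_of_col hlegal hcellT hc1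
      -- decompositions
      have hbIcc : b ∈ Finset.Icc 1 r := by rw [Finset.mem_Icc]; omega
      have hb'Icc : a - i + j ∈ Finset.Icc 1 r := by rw [Finset.mem_Icc]; omega
      have e1 := map_split (Finset.Icc 1 r) hbIcc (fun b' => colH B b' + b')
      have e2 := map_split (Finset.Icc 1 r) hbIcc (fun b' => colH (B.erase (a, b)) b' + b')
      have e3 := map_split (Finset.Icc 1 r) hb'Icc (fun b' => colH (transposeAt B i j) b' + b')
      have e4 := map_split (Finset.Icc 1 r) hb'Icc
        (fun b' => colH (transposeAt (B.erase (a, b)) i j) b' + b')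
      -- identify tails
      have etail1 : (((Finset.Icc 1 r).erase b).val.map (fun b' => colH (B.erase (a, b)) b' + b'))
          = ((Finset.Icc 1 r).erase b).val.map (fun b' => colH B b' + b') := by
        apply Multiset.map_congr rfl
        intro x hx
        rw [Finset.mem_val, Finset.mem_erase] at hx
        rw [colH_erase_ne hx.1]
      have etail2 : (((Finset.Icc 1 r).erase (a - i + j)).val.map
            (fun b' => colH (transposeAt (B.erase (a, b)) i j) b' + b'))
          = ((Finset.Icc 1 r).erase (a - i + j)).val.map
            (fun b' => colH (transposeAt B i j) b' + b') := by
        apply Multiset.map_congr rfl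
        intro x hx
        rw [Finset.mem_val, Finset.mem_erase] at hx
        rw [htr, colH_erase_ne hx.1]
      have hh2 : colH (B.erase (a, b)) b = a - 1 := by
        rw [colH_erase_self hp0B, htopB]
      have hh4 : colH (transposeAt (B.erase (a, b)) i j) (a - i + j) = b - j + i - 1 := by
        rw [htr, colH_erase_self hcellT, htopT]
      rw [e2, e4, etail1, etail2] at hIH
      simp only [hh2, hh4] at hIH
      have hhead : a - 1 + b = b - j + i - 1 + (a - i + j) := by omega
      rw [← hhead] at hIH
      have hLR := (Multiset.cons_inj_right _).1 hIH
      rw [e1, e3]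
      simp only [htopB, htopT]
      rw [hLR]
      have : a + b = b - j + i + (a - i + j) := by omega
      rw [this]

lemma matching_card_le (hB : IsYoung ℓ r B) {M : Finset (ℕ × ℕ)} (hM : M ∈ ydMatchings B) :
    M.card ≤ r := by
  rw [mem_ydMatchings] at hM
  obtain ⟨hMB, hMm⟩ := hM
  have h1 : M.card = (M.image Prod.snd).card := by
    rw [Finset.card_image_of_injOn]
    intro p hp q hq hpq
    by_contra hne
    exact (hMm p hp q hq hne).2 hpq
  rw [h1]
  have h2 : M.image Prod.snd ⊆ Finset.Icc 1 r := by
    intro v hv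
    rw [Finset.mem_image] at hv
    obtain ⟨p, hp, rfl⟩ := hv
    have := hB.1 p (hMB hp)
    rw [Finset.mem_Icc]
    omega
  have := Finset.card_le_card h2
  simpa using this

lemma ydMk_zero (hB : IsYoung ℓ r B) {k : ℕ} (hk : r < k) : ydMk B k = 0 := by
  rw [ydMk, Finset.card_eq_zero, Finset.filter_eq_empty_iff]
  intro M hM
  have := matching_card_le hB hM
  omega

lemma sum_group (hB : IsYoung ℓ r B) (f : ℕ → ℕ) :
    ∑ M ∈ ydMatchings B, f M.card = ∑ k ∈ Finset.range (r + 1), ydMk B k * f k := by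
  have hmaps : ∀ M ∈ ydMatchings B, M.card ∈ Finset.range (r + 1) := by
    intro M hM
    rw [Finset.mem_range]
    have := matching_card_le hB hM
    omega
  rw [← Finset.sum_fiberwise_of_maps_to hmaps (fun M => f M.card)]
  apply Finset.sum_congr rfl
  intro k _
  rw [ydMk, Finset.sum_congr rfl (fun M hM => by rw [(Finset.mem_filter.1 hM).2]),
    Finset.sum_const, smul_eq_mul]

lemma key_identity (hB : IsYoung ℓ r B) (m : ℕ) (hm : r ≤ m) :
    ∑ k ∈ Finset.range (r + 1), ydMk B k * m.descFactorial (r - k)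
      = ∏ b ∈ Finset.Icc 1 r, ((m - r) + (colH B b + b)) := by
  rw [← sum_group hB (fun k => m.descFactorial (r - k))]
  have h1 : m - r + r = m := by omega
  rw [← count_sum' hB (m - r), h1]

-- extraction of coefficients from descPochhammer expansions
lemma desc_extract : ∀ (n : ℕ) (a : ℕ → ℤ),
    (∑ k ∈ Finset.range (n + 1), Polynomial.C (a k) * descPochhammer ℤ (n - k)) = 0 →
    ∀ k ≤ n, a k = 0 := by
  intro n
  induction n with
  | zero =>
    intro a h k hk
    interval_cases k
    have : Polynomial.C (a 0) = 0 := by simpa [descPochhammer] using h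
    exact Polynomial.C_eq_zero.1 this
  | succ n ih =>
    intro a h
    have ha0 : a 0 = 0 := by
      have hc := congrArg (fun p => Polynomial.coeff p (n + 1)) h
      simp only [Polynomial.finset_sum_coeff, Polynomial.coeff_C_mul,
        Polynomial.coeff_zero] at hc
      rw [Finset.sum_eq_single 0] at hc
      · have hcoeff : (descPochhammer ℤ (n + 1)).coeff (n + 1) = 1 := by
          have h5 := (monic_descPochhammer ℤ (n + 1)).coeff_natDegree
          rwa [descPochhammer_natDegree] at h5
        rw [Nat.sub_zero, hcoeff, mul_one] at hc
        exact hc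
      · intro k hk hkne
        rw [Finset.mem_range] at hk
        have hdeg : (descPochhammer ℤ (n + 1 - k)).natDegree < n + 1 := by
          rw [descPochhammer_natDegree]
          omega
        rw [Polynomial.coeff_eq_zero_of_natDegree_lt hdeg, mul_zero]
      · intro hc
        exact absurd (Finset.mem_range.2 (by omega)) hc
    have hrest : (∑ k ∈ Finset.range (n + 1), Polynomial.C (a (k + 1)) * descPochhammer ℤ (n - k)) = 0 := by
      rw [Finset.sum_range_succ'] at h
      simp only [ha0, Polynomial.C_0, zero_mul, add_zero] at h
      rw [← h]
      apply Finset.sum_congr rfl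
      intro k _
      congr 2
      omega
    intro k hk
    rcases Nat.eq_zero_or_pos k with rfl | hkpos
    · exact ha0
    · obtain ⟨k', rfl⟩ := Nat.exists_eq_add_of_lt hkpos
      have := ih (fun t => a (t + 1)) hrest k' (by omega)
      simpa using this

end TP

/-- A legal transpose of a Young diagram preserves the number of matchings of every
size: if `B` is a Young diagram in an `ℓ × r` frame, `(i,j) ∈ B`, and the transpose of
`B` at `(i,j)` is again a Young diagram in the frame, then `m_k(B*_{(i,j)}) = m_k(B)`
for every `k`. -/
theorem transpose_preserves_matchings (ℓ r : ℕ) (B : Finset (ℕ × ℕ)) (hB : IsYoung ℓ r B)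
    (i j : ℕ) (hP : (i, j) ∈ B) (hlegal : IsYoung ℓ r (transposeAt B i j)) :
    ∀ k : ℕ, ydMk (transposeAt B i j) k = ydMk B k := by
  intro k
  by_cases hk : k ≤ r
  · have hMS := TP.MS_trans (i := i) (j := j)
      ((B.filter (fun p => i ≤ p.1 ∧ j ≤ p.2)).card) B rfl hB hP hlegal
    have hprod : ∀ y : ℕ, (∏ b ∈ Finset.Icc 1 r, (y + (TP.colH B b + b)))
        = ∏ b ∈ Finset.Icc 1 r, (y + (TP.colH (transposeAt B i j) b + b)) := by
      intro y
      rw [Finset.prod_eq_multiset_prod, Finset.prod_eq_multiset_prod]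
      have h1 : ((Finset.Icc 1 r).val.map fun b => y + (TP.colH B b + b))
          = ((Finset.Icc 1 r).val.map fun b => TP.colH B b + b).map (fun t => y + t) := by
        rw [Multiset.map_map]
        rfl
      have h2 : ((Finset.Icc 1 r).val.map fun b => y + (TP.colH (transposeAt B i j) b + b))
          = ((Finset.Icc 1 r).val.map fun b => TP.colH (transposeAt B i j) b + b).map
            (fun t => y + t) := by
        rw [Multiset.map_map]
        rfl
      rw [h1, h2, hMS]
    have hsum : ∀ m : ℕ, r ≤ m →
        (∑ t ∈ Finset.range (r + 1), ydMk (transposeAt B i j) t * m.descFactorial (r - t))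
          = ∑ t ∈ Finset.range (r + 1), ydMk B t * m.descFactorial (r - t) := by
      intro m hm
      rw [TP.key_identity hlegal m hm, TP.key_identity hB m hm, hprod]
    set a : ℕ → ℤ := fun t => (ydMk (transposeAt B i j) t : ℤ) - (ydMk B t : ℤ) with ha
    set P : Polynomial ℤ :=
      ∑ t ∈ Finset.range (r + 1), Polynomial.C (a t) * descPochhammer ℤ (r - t) with hPdef
    have hroot : ∀ m : ℕ, r ≤ m → P.IsRoot (m : ℤ) := by
      intro m hm
      rw [Polynomial.IsRoot, hPdef, Polynomial.eval_finset_sum]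
      have heval : ∀ t ∈ Finset.range (r + 1),
          (Polynomial.C (a t) * descPochhammer ℤ (r - t)).eval (m : ℤ)
            = a t * (m.descFactorial (r - t) : ℤ) := by
        intro t _
        rw [Polynomial.eval_mul, Polynomial.eval_C, descPochhammer_eval_eq_descFactorial]
      rw [Finset.sum_congr rfl heval]
      have hcast := congrArg (fun t : ℕ => (t : ℤ)) (hsum m hm)
      push_cast at hcast
      simp only [ha, sub_mul]
      rw [Finset.sum_sub_distrib, hcast, sub_self]
    have hinf : Set.Infinite {x : ℤ | P.IsRoot x} := by
      apply Set.Infinite.mono (s := (fun m : ℕ => (m : ℤ)) '' Set.Ici r)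
      · rintro x ⟨m, hm, rfl⟩
        exact hroot m hm
      · apply Set.Infinite.image
        · intro x _ y _ hxy
          have hxy2 : (x : ℤ) = (y : ℤ) := hxy
          exact_mod_cast hxy2
        · exact Set.Ici_infinite r
    have hP0 : P = 0 := Polynomial.eq_zero_of_infinite_isRoot P hinf
    have hak := TP.desc_extract r a (by rw [← hPdef]; exact hP0) k hk
    have hfin : (ydMk (transposeAt B i j) k : ℤ) = (ydMk B k : ℤ) := by
      simp only [ha] at hak
      omega
    exact_mod_cast hfin
  · rw [TP.ydMk_zero hlegal (by omega), TP.ydMk_zero hB (by omega)]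
end

section
/- Let B be a Young diagram in an ℓ×r frame with ℓ ≤ r. Suppose B admits no out-block move (there is no out-corner P of B and in-corner P′ of B with s(P) < s(P′)), and suppose B is not the lex-least Young diagram with |B| boxes in the frame, i.e., B is not of the form consisting of q full rows of length r followed by one row of length c where |B| = qr + c with 0 ≤ c < r. Then there exists P ∈ B such that the transpose of B at P is legal and B*_P <_L B. -/
open Classical

/-- Strict lex order on boxes: `(a,b) ≲ (c,d)` (strictly) iff `a < c`, or `a = c` and
`b < d`. -/
def boxLt (p q : ℕ × ℕ) : Prop := p.1 < q.1 ∨ (p.1 = q.1 ∧ p.2 < q.2)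

/-- Lex order on Young diagrams: `B <_L B'` iff the `≲`-least element of `B △ B'`
belongs to `B`. -/
def ydLexLt (B B' : Finset (ℕ × ℕ)) : Prop :=
  ∃ p ∈ symmDiff B B', p ∈ B ∧ ∀ q ∈ symmDiff B B', q ≠ p → boxLt p q

/-- The lex-least Young diagram with `N` boxes in an `ℓ × r` frame: `q` full rows of
length `r` followed by one row of length `c`, where `N = q * r + c` with `0 ≤ c < r`;
equivalently, box `(i,j)` is present iff `(i-1) * r + j ≤ N`. -/
noncomputable def lexYD (ℓ r N : ℕ) : Finset (ℕ × ℕ) :=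
  ((Finset.Icc 1 ℓ) ×ˢ (Finset.Icc 1 r)).filter fun p => (p.1 - 1) * r + p.2 ≤ N

namespace YDaux

/-- a downward-closed finset of positive naturals is an initial interval -/
lemma downward_closed_eq_Icc (S : Finset ℕ) (h0 : 0 ∉ S)
    (hd : ∀ y ∈ S, ∀ z, 1 ≤ z → z ≤ y → z ∈ S) : S = Finset.Icc 1 S.card := by
  rcases S.eq_empty_or_nonempty with h | h
  · simp [h]
  · have hm := S.max'_mem h
    have hS : S = Finset.Icc 1 (S.max' h) := by
      apply Finset.Subset.antisymm
      · intro x hx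
        simp only [Finset.mem_Icc]
        exact ⟨Nat.one_le_iff_ne_zero.2 (fun hx0 => h0 (hx0 ▸ hx)), S.le_max' x hx⟩
      · intro x hx
        simp only [Finset.mem_Icc] at hx
        exact hd _ hm x hx.1 hx.2
    have hc : S.card = S.max' h := by
      conv_lhs => rw [hS]
      simp
    rw [hc]; exact hS

variable {ℓ r : ℕ} {B : Finset (ℕ × ℕ)}

noncomputable def rlen (B : Finset (ℕ × ℕ)) (a : ℕ) : ℕ :=
  (B.filter fun p => p.1 = a).card

lemma left_closed (hB : IsYoung ℓ r B) {x y : ℕ} (hxy : (x, y) ∈ B) {z : ℕ}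
    (hz : 1 ≤ z) (hzy : z ≤ y) : (x, z) ∈ B := by
  induction y with
  | zero => omega
  | succ n ih =>
    rcases Nat.eq_or_lt_of_le hzy with h | h
    · exact h ▸ hxy
    · exact ih (by simpa using hB.2.2 _ hxy (by omega)) (by omega)

lemma up_closed (hB : IsYoung ℓ r B) {x y : ℕ} (hxy : (x, y) ∈ B) {w : ℕ}
    (hw : 1 ≤ w) (hwx : w ≤ x) : (w, y) ∈ B := by
  induction x with
  | zero => omega
  | succ n ih =>
    rcases Nat.eq_or_lt_of_le hwx with h | h
    · exact h ▸ hxy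
    · exact ih (by simpa using hB.2.1 _ hxy (by omega)) (by omega)

lemma mem_iff_rlen (hB : IsYoung ℓ r B) (x y : ℕ) :
    (x, y) ∈ B ↔ 1 ≤ y ∧ y ≤ rlen B x := by
  set S : Finset ℕ := (B.filter fun p => p.1 = x).image Prod.snd with hSdef
  have hmemS : ∀ y : ℕ, y ∈ S ↔ (x, y) ∈ B := by
    intro y
    simp only [hSdef, Finset.mem_image, Finset.mem_filter]
    constructor
    · rintro ⟨p, ⟨hp, hp1⟩, hp2⟩
      have : p = (x, y) := Prod.ext hp1 hp2
      exact this ▸ hp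
    · intro h; exact ⟨(x, y), ⟨h, rfl⟩, rfl⟩
  have hcard : S.card = rlen B x := by
    rw [hSdef, rlen]
    apply Finset.card_image_of_injOn
    intro p hp q hq hpq
    simp only [Finset.mem_coe, Finset.mem_filter] at hp hq
    exact Prod.ext (hp.2.trans hq.2.symm) hpq
  have h0 : 0 ∉ S := by
    rw [hmemS]; intro h; exact absurd (hB.1 _ h).2.2.1 (by omega)
  have hd : ∀ y ∈ S, ∀ z, 1 ≤ z → z ≤ y → z ∈ S := by
    intro y hy z hz hzy
    rw [hmemS] at hy ⊢
    exact left_closed hB hy hz hzy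
  have := downward_closed_eq_Icc S h0 hd
  rw [← hmemS, this, hcard, Finset.mem_Icc]

lemma rlen_le_r (hB : IsYoung ℓ r B) (a : ℕ) : rlen B a ≤ r := by
  by_cases h : rlen B a = 0
  · omega
  · have : (a, rlen B a) ∈ B := (mem_iff_rlen hB a _).2 ⟨by omega, le_refl _⟩
    exact (hB.1 _ this).2.2.2

lemma rlen_pos_bounds (hB : IsYoung ℓ r B) {a : ℕ} (h : 1 ≤ rlen B a) :
    1 ≤ a ∧ a ≤ ℓ := by
  have : (a, rlen B a) ∈ B := (mem_iff_rlen hB a _).2 ⟨h, le_refl _⟩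
  exact ⟨(hB.1 _ this).1, (hB.1 _ this).2.1⟩

lemma rlen_anti (hB : IsYoung ℓ r B) {a b : ℕ} (ha : 1 ≤ a) (hab : a ≤ b) :
    rlen B b ≤ rlen B a := by
  by_cases h : rlen B b = 0
  · omega
  · have hb : (b, rlen B b) ∈ B := (mem_iff_rlen hB b _).2 ⟨by omega, le_refl _⟩
    exact ((mem_iff_rlen hB a _).1 (up_closed hB hb ha hab)).2

noncomputable def clen (ℓ : ℕ) (B : Finset (ℕ × ℕ)) (j : ℕ) : ℕ :=
  ((Finset.Icc 1 ℓ).filter fun a => j ≤ rlen B a).card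

lemma clen_iff (hB : IsYoung ℓ r B) {j : ℕ} (hj : 1 ≤ j) {a : ℕ} (ha : 1 ≤ a) :
    j ≤ rlen B a ↔ a ≤ clen ℓ B j := by
  set A : Finset ℕ := (Finset.Icc 1 ℓ).filter fun a => j ≤ rlen B a with hA
  have h0 : 0 ∉ A := by simp [hA]
  have hd : ∀ y ∈ A, ∀ z, 1 ≤ z → z ≤ y → z ∈ A := by
    intro y hy z hz hzy
    simp only [hA, Finset.mem_filter, Finset.mem_Icc] at hy ⊢
    exact ⟨⟨hz, le_trans hzy hy.1.2⟩, le_trans hy.2 (rlen_anti hB hz hzy)⟩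
  have heq := downward_closed_eq_Icc A h0 hd
  constructor
  · intro h
    have haA : a ∈ A := by
      simp only [hA, Finset.mem_filter, Finset.mem_Icc]
      exact ⟨⟨ha, (rlen_pos_bounds hB (le_trans hj h)).2⟩, h⟩
    have := heq ▸ haA
    simpa [clen] using (Finset.mem_Icc.1 this).2
  · intro h
    have : a ∈ A := by rw [heq]; simp only [Finset.mem_Icc]; exact ⟨ha, by simpa [clen] using h⟩
    simp only [hA, Finset.mem_filter] at this
    exact this.2

lemma clen_le (ℓ : ℕ) (B : Finset (ℕ × ℕ)) (j : ℕ) : clen ℓ B j ≤ ℓ := by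
  calc clen ℓ B j ≤ (Finset.Icc 1 ℓ).card := Finset.card_le_card (Finset.filter_subset _ _)
  _ = ℓ := by simp

lemma clen_anti (ℓ : ℕ) (B : Finset (ℕ × ℕ)) {j j' : ℕ} (h : j ≤ j') :
    clen ℓ B j' ≤ clen ℓ B j :=
  Finset.card_le_card (fun a ha => by
    simp only [Finset.mem_filter] at ha ⊢
    exact ⟨ha.1, le_trans h ha.2⟩)



lemma mem_transposeAt {B : Finset (ℕ × ℕ)} {i j x y : ℕ} :
    (x, y) ∈ transposeAt B i j ↔
      ((x, y) ∈ B ∧ (x < i ∨ y < j)) ∨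
        (i ≤ x ∧ j ≤ y ∧ (y - j + i, x - i + j) ∈ B) := by
  simp only [transposeAt, Finset.mem_union, Finset.mem_filter, Finset.mem_image,
    Prod.mk.injEq, Prod.exists]
  constructor
  · rintro (h | ⟨a, b, ⟨hab, hia, hjb⟩, hx, hy⟩)
    · exact Or.inl h
    · refine Or.inr ⟨by omega, by omega, ?_⟩
      have h1 : y - j + i = a := by omega
      have h2 : x - i + j = b := by omega
      rw [h1, h2]; exact hab
  · rintro (h | ⟨hix, hjy, hab⟩)
    · exact Or.inl h
    · exact Or.inr ⟨y - j + i, x - i + j, ⟨hab, by omega, by omega⟩, by omega, by omega⟩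

lemma transpose_good {ℓ r : ℕ} {B : Finset (ℕ × ℕ)} (hB : IsYoung ℓ r B) {i j K : ℕ}
    (hi : 1 ≤ i) (hj : 1 ≤ j) (hji : j ≤ rlen B i)
    (hK : ∀ a, 1 ≤ a → (j ≤ rlen B a ↔ a ≤ K)) (hKl : K ≤ ℓ)
    (hA : i + rlen B i + 1 ≤ K + j) (hB4 : K + j ≤ i + r)
    (hB5 : 2 ≤ i → rlen B (i - 1) = r) :
    IsYoung ℓ r (transposeAt B i j) ∧ ydLexLt (transposeAt B i j) B := by
  have hmem : ∀ x y : ℕ, (x, y) ∈ B ↔ 1 ≤ y ∧ y ≤ rlen B x := mem_iff_rlen hB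
  have hiK : i < K := by
    have := hA; omega
  constructor
  · refine ⟨?_, ?_, ?_⟩
    · -- frame
      rintro ⟨x, y⟩ hp
      rw [mem_transposeAt] at hp
      rcases hp with ⟨hxy, _⟩ | ⟨hix, hjy, hab⟩
      · exact hB.1 _ hxy
      · have h1 : x - i + j ≤ rlen B (y - j + i) := ((hmem _ _).1 hab).2
        have h2 : rlen B (y - j + i) ≤ rlen B i := rlen_anti hB hi (by omega)
        have h3 : y - j + i ≤ K := by
          refine (hK _ (by omega)).1 ?_
          omega
        simp only
        omega
    · -- up closure
      rintro ⟨x, y⟩ hp hx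
      simp only at hx
      rw [mem_transposeAt] at hp
      simp only
      rw [mem_transposeAt]
      rcases hp with ⟨hxy, hor⟩ | ⟨hix, hjy, hab⟩
      · exact Or.inl ⟨hB.2.1 _ hxy hx, by omega⟩
      · rcases Nat.lt_or_ge i x with hlt | hge
        · refine Or.inr ⟨by omega, hjy, ?_⟩
          have hb := (hmem _ _).1 hab
          refine (hmem _ _).2 ⟨by omega, ?_⟩
          have : x - 1 - i + j ≤ x - i + j := by omega
          omega
        · -- x = i, so i ≥ 2
          have hxi : x = i := by omega
          subst hxi
          have hi2 : 2 ≤ x := by omega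
          have hb := (hmem _ _).1 hab
          have haK : y - j + x ≤ K := by
            refine (hK _ (by omega)).1 ?_
            omega
          refine Or.inl ⟨(hmem _ _).2 ⟨by omega, ?_⟩, by omega⟩
          have := hB5 hi2
          omega
    · -- left closure
      rintro ⟨x, y⟩ hp hy
      simp only at hy
      rw [mem_transposeAt] at hp
      simp only
      rw [mem_transposeAt]
      rcases hp with ⟨hxy, hor⟩ | ⟨hix, hjy, hab⟩
      · exact Or.inl ⟨hB.2.2 _ hxy hy, by omega⟩
      · rcases Nat.lt_or_ge j y with hlt | hge
        · refine Or.inr ⟨hix, by omega, ?_⟩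
          have hb := (hmem _ _).1 hab
          have hanti : rlen B (y - j + i) ≤ rlen B (y - 1 - j + i) :=
            rlen_anti hB (by omega) (by omega)
          exact (hmem _ _).2 ⟨by omega, by omega⟩
        · -- y = j, so j ≥ 2
          have hyj : y = j := by omega
          have hb := (hmem _ _).1 hab
          have hyi : y - j + i = i := by omega
          rw [hyi] at hb
          have hxK : x ≤ K := by omega
          have hjx : j ≤ rlen B x := (hK x (by omega)).2 hxK
          exact Or.inl ⟨(hmem _ _).2 ⟨by omega, by omega⟩, by omega⟩
  · -- lex
    have hrow : ∀ y, 1 ≤ y → y ≤ rlen B i → (i, y) ∈ transposeAt B i j := by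
      intro y h1 h2
      rw [mem_transposeAt]
      rcases Nat.lt_or_ge y j with h | h
      · exact Or.inl ⟨(hmem _ _).2 ⟨h1, h2⟩, Or.inr h⟩
      · refine Or.inr ⟨le_refl _, h, ?_⟩
        have h1 : y - j + i ≤ K := by omega
        have h2 := (hK (y - j + i) (by omega)).2 h1
        exact (hmem _ _).2 ⟨by omega, by omega⟩
    have hpmem : (i, rlen B i + 1) ∈ transposeAt B i j := by
      rw [mem_transposeAt]
      refine Or.inr ⟨le_refl _, by omega, ?_⟩
      have h1 : rlen B i + 1 - j + i ≤ K := by omega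
      have h2 := (hK _ (show 1 ≤ rlen B i + 1 - j + i by omega)).2 h1
      exact (hmem _ _).2 ⟨by omega, by omega⟩
    have hpnot : (i, rlen B i + 1) ∉ B := by
      rw [hmem]; omega
    have hlow : ∀ x y : ℕ, x < i → ((x, y) ∈ transposeAt B i j ↔ (x, y) ∈ B) := by
      intro x y hxi
      rw [mem_transposeAt]
      constructor
      · rintro (⟨h, _⟩ | ⟨h, _⟩)
        · exact h
        · omega
      · intro h; exact Or.inl ⟨h, Or.inl hxi⟩
    refine ⟨(i, rlen B i + 1), ?_, hpmem, ?_⟩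
    · rw [Finset.mem_symmDiff]
      exact Or.inl ⟨hpmem, hpnot⟩
    · rintro ⟨x, y⟩ hq hne
      rw [Finset.mem_symmDiff] at hq
      have hy1 : 1 ≤ y := by
        rcases hq with ⟨h, _⟩ | ⟨h, _⟩
        · rw [mem_transposeAt] at h
          rcases h with ⟨h, _⟩ | ⟨_, h, _⟩
          · exact ((hmem _ _).1 h).1
          · omega
        · exact ((hmem _ _).1 h).1
      rcases Nat.lt_trichotomy x i with hx | hx | hx
      · exfalso
        rcases hq with ⟨h1, h2⟩ | ⟨h1, h2⟩
        · exact h2 ((hlow x y hx).1 h1)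
        · exact h2 ((hlow x y hx).2 h1)
      · subst hx
        rcases Nat.lt_trichotomy y (rlen B x + 1) with hy | hy | hy
        · exfalso
          have hBm : (x, y) ∈ B := (hmem _ _).2 ⟨hy1, by omega⟩
          have hTm : (x, y) ∈ transposeAt B x j := hrow y hy1 (by omega)
          rcases hq with ⟨_, h2⟩ | ⟨_, h2⟩
          · exact h2 hBm
          · exact h2 hTm
        · exact (hne (by rw [hy])).elim
        · exact Or.inr ⟨rfl, by omega⟩
      · exact Or.inl (by omega)



variable {ℓ r : ℕ} {B : Finset (ℕ × ℕ)}

lemma out_corner (hB : IsYoung ℓ r B) {t : ℕ} (hpos : 1 ≤ rlen B t)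
    (h0 : rlen B (t + 1) = 0) : OutCorner ℓ r B (t, rlen B t) := by
  have hmem := mem_iff_rlen hB
  refine ⟨(hmem _ _).2 ⟨hpos, le_refl _⟩, ?_, ?_, ?_⟩
  · intro p hp; exact hB.1 _ (Finset.mem_of_mem_erase hp)
  · rintro ⟨x, y⟩ hp hx
    simp only at hx
    rw [Finset.mem_erase] at hp ⊢
    refine ⟨?_, hB.2.1 _ hp.2 hx⟩
    intro he
    rw [Prod.ext_iff] at he
    simp only at he
    have hm := (hmem x y).1 hp.2
    have hx1 : x = t + 1 := by omega
    rw [hx1] at hm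
    omega
  · rintro ⟨x, y⟩ hp hy
    simp only at hy
    rw [Finset.mem_erase] at hp ⊢
    refine ⟨?_, hB.2.2 _ hp.2 hy⟩
    intro he
    rw [Prod.ext_iff] at he
    simp only at he
    have hm := (hmem x y).1 hp.2
    have hx1 : x = t := by omega
    rw [hx1] at hm
    omega

lemma in_corner (hB : IsYoung ℓ r B) {i : ℕ} (hi : 1 ≤ i) (hil : i ≤ ℓ)
    (hir : rlen B i < r) (h2 : i = 1 ∨ rlen B i < rlen B (i - 1)) :
    InCorner ℓ r B (i, rlen B i + 1) := by
  have hmem := mem_iff_rlen hB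
  refine ⟨fun h => by have := (hmem _ _).1 h; omega, ?_, ?_, ?_⟩
  · intro p hp
    rcases Finset.mem_insert.1 hp with h | h
    · subst h; exact ⟨hi, hil, by omega, by omega⟩
    · exact hB.1 _ h
  · rintro ⟨x, y⟩ hp hx
    simp only at hx
    show (x - 1, y) ∈ insert (i, rlen B i + 1) B
    rcases Finset.mem_insert.1 hp with h | h
    · rw [Prod.ext_iff] at h
      simp only at h
      obtain ⟨h3, h4⟩ := h
      subst h3; subst h4
      refine Finset.mem_insert.2 (Or.inr ((hmem _ _).2 ⟨by omega, ?_⟩))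
      rcases h2 with h2 | h2
      · omega
      · omega
    · exact Finset.mem_insert.2 (Or.inr (hB.2.1 _ h hx))
  · rintro ⟨x, y⟩ hp hy
    simp only at hy
    show (x, y - 1) ∈ insert (i, rlen B i + 1) B
    rcases Finset.mem_insert.1 hp with h | h
    · rw [Prod.ext_iff] at h
      simp only at h
      obtain ⟨h3, h4⟩ := h
      subst h3
      exact Finset.mem_insert.2 (Or.inr ((hmem _ _).2 ⟨by omega, by omega⟩))
    · exact Finset.mem_insert.2 (Or.inr (hB.2.2 _ h hy))

lemma eq_lexYD (hB : IsYoung ℓ r B) {a0 : ℕ} (ha0 : a0 ≤ ℓ)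
    (h1 : ∀ a, 1 ≤ a → a ≤ a0 → rlen B a = r) (h2 : ∀ a, a0 < a → rlen B a = 0) :
    B = lexYD ℓ r B.card := by
  have hmem := mem_iff_rlen hB
  have hcard : B.card = a0 * r := by
    have hfib : B.card = ∑ a ∈ Finset.Icc 1 ℓ, rlen B a := by
      apply Finset.card_eq_sum_card_fiberwise
      intro p hp
      have := hB.1 _ hp
      simp only [Finset.mem_coe, Finset.mem_Icc]
      omega
    rw [hfib]
    have hcong : ∀ a ∈ Finset.Icc 1 ℓ, rlen B a = if a ≤ a0 then r else 0 := by
      intro a ha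
      simp only [Finset.mem_Icc] at ha
      split_ifs with h
      · exact h1 a ha.1 h
      · exact h2 a (by omega)
    rw [Finset.sum_congr rfl hcong, ← Finset.sum_filter]
    have hfil : (Finset.Icc 1 ℓ).filter (· ≤ a0) = Finset.Icc 1 a0 := by
      ext a
      simp only [Finset.mem_filter, Finset.mem_Icc]
      omega
    rw [hfil, Finset.sum_const, smul_eq_mul, Nat.card_Icc]
    simp
  rw [hcard]
  ext ⟨x, y⟩
  simp only [lexYD, Finset.mem_filter, Finset.mem_product, Finset.mem_Icc]
  constructor
  · intro h
    have hb := hB.1 _ h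
    simp only at hb
    have hm := (hmem x y).1 h
    have hxa : x ≤ a0 := by
      by_contra hc
      have := h2 x (by omega)
      omega
    refine ⟨⟨⟨hb.1, hb.2.1⟩, ⟨hb.2.2.1, hb.2.2.2⟩⟩, ?_⟩
    calc (x - 1) * r + y ≤ (x - 1) * r + r := by omega
      _ = ((x - 1) + 1) * r := by ring
      _ ≤ a0 * r := Nat.mul_le_mul_right r (by omega)
  · rintro ⟨⟨⟨hx1, hxl⟩, hy1, hyr⟩, hle⟩
    have hxa : x ≤ a0 := by
      by_contra hc
      have hge : a0 * r + 1 ≤ (x - 1) * r + y := by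
        have : a0 * r ≤ (x - 1) * r := Nat.mul_le_mul_right r (by omega)
        omega
      omega
    refine (hmem x y).2 ⟨hy1, ?_⟩
    rw [h1 x hx1 hxa]
    exact hyr

end YDaux

open YDaux

/-- Let `B` be a Young diagram in an `ℓ × r` frame with `ℓ ≤ r`, admitting no out-block
move, and not equal to the lex-least Young diagram with `|B|` boxes in the frame.  Then
there is `P ∈ B` such that the transpose of `B` at `P` is legal and `B*_P <_L B`. -/
theorem exists_legal_transpose_lex_lt (ℓ r : ℕ) (hlr : ℓ ≤ r)
    (B : Finset (ℕ × ℕ)) (hB : IsYoung ℓ r B)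
    (hnomove : ¬ ∃ P P' : ℕ × ℕ, OutCorner ℓ r B P ∧ InCorner ℓ r B P' ∧
      P.1 + P.2 < P'.1 + P'.2)
    (hnotlex : B ≠ lexYD ℓ r B.card) :
    ∃ P ∈ B, IsYoung ℓ r (transposeAt B P.1 P.2) ∧ ydLexLt (transposeAt B P.1 P.2) B := by
  classical
  have hmem := mem_iff_rlen hB
  set t := clen ℓ B 1 with ht
  rcases Nat.eq_zero_or_pos t with ht0 | ht1
  · exfalso
    apply hnotlex
    apply eq_lexYD hB (a0 := 0) (Nat.zero_le ℓ)
    · intro a ha1 ha0; omega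
    · intro a ha
      by_contra h
      have h1 : 1 ≤ rlen B a := by omega
      have h2 := (clen_iff hB le_rfl (show 1 ≤ a by omega)).1 h1
      omega
  · have htl : t ≤ ℓ := clen_le ℓ B 1
    have hlamt : 1 ≤ rlen B t := (clen_iff hB le_rfl ht1).2 le_rfl
    have hlamt1 : rlen B (t + 1) = 0 := by
      by_contra h
      have h1 : 1 ≤ rlen B (t + 1) := by omega
      have h2 := (clen_iff hB le_rfl (show 1 ≤ t + 1 by omega)).1 h1
      omega
    have hout := out_corner hB hlamt hlamt1
    obtain ⟨i, hi1, hit, hlami, hlamir, hcase⟩ :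
        ∃ i, 1 ≤ i ∧ i ≤ t ∧ 1 ≤ rlen B i ∧ rlen B i < r ∧
          (i = 1 ∨ rlen B (i - 1) = r) := by
      by_cases h1r : rlen B 1 < r
      · have : rlen B t ≤ rlen B 1 := rlen_anti hB le_rfl ht1
        exact ⟨1, le_rfl, ht1, by omega, h1r, Or.inl rfl⟩
      · have hr1 : 1 ≤ r := le_trans hlamt (rlen_le_r hB t)
        have h1r' : rlen B 1 = r := le_antisymm (rlen_le_r hB 1) (by omega)
        have ha01 : 1 ≤ clen ℓ B r := (clen_iff hB hr1 le_rfl).1 (by omega)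
        set a0 := clen ℓ B r with ha0
        by_cases hz : rlen B (a0 + 1) = 0
        · exfalso
          apply hnotlex
          apply eq_lexYD hB (clen_le ℓ B r)
          · intro a ha1 haa0
            exact le_antisymm (rlen_le_r hB a) ((clen_iff hB hr1 ha1).2 haa0)
          · intro a ha
            have := rlen_anti hB (show 1 ≤ a0 + 1 by omega) (show a0 + 1 ≤ a by omega)
            omega
        · refine ⟨a0 + 1, by omega, ?_, by omega, ?_, Or.inr ?_⟩
          · exact (clen_iff hB le_rfl (by omega)).1 (by omega)
          · by_contra h
            have := (clen_iff hB hr1 (show 1 ≤ a0 + 1 by omega)).1 (by omega)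
            omega
          · have e : a0 + 1 - 1 = a0 := by omega
            rw [e]
            exact le_antisymm (rlen_le_r hB a0) ((clen_iff hB hr1 ha01).2 le_rfl)
    have hil : i ≤ ℓ := le_trans hit htl
    have hin := in_corner hB hi1 hil hlamir
      (by rcases hcase with h | h
          · exact Or.inl h
          · exact Or.inr (by omega))
    have key : i + rlen B i + 1 ≤ t + rlen B t := by
      by_contra h
      exact hnomove ⟨(t, rlen B t), (i, rlen B i + 1), hout, hin,
        show t + rlen B t < i + (rlen B i + 1) by omega⟩
    set J := (Finset.Icc 1 (rlen B i)).filter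
      (fun j' => i + rlen B i + 1 ≤ clen ℓ B j' + j') with hJ
    have hlamti : rlen B t ≤ rlen B i := rlen_anti hB hi1 hit
    have hne : J.Nonempty := by
      refine ⟨rlen B t, ?_⟩
      rw [hJ, Finset.mem_filter, Finset.mem_Icc]
      refine ⟨⟨hlamt, hlamti⟩, ?_⟩
      have : t ≤ clen ℓ B (rlen B t) := (clen_iff hB hlamt ht1).1 le_rfl
      omega
    set j := J.min' hne with hj
    have hjJ : j ∈ J := J.min'_mem hne
    rw [hJ, Finset.mem_filter, Finset.mem_Icc] at hjJ
    obtain ⟨⟨hj1, hjlam⟩, hAj⟩ := hjJ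
    have hB4 : clen ℓ B j + j ≤ i + r := by
      rcases Nat.eq_or_lt_of_le hj1 with h | h
      · have := clen_le ℓ B j
        omega
      · have hnotJ : j - 1 ∉ J := fun hmem' => by
          have := J.min'_le _ hmem'
          omega
        have h2 : ¬ (i + rlen B i + 1 ≤ clen ℓ B (j - 1) + (j - 1)) := by
          intro hcon
          exact hnotJ (by
            rw [hJ, Finset.mem_filter, Finset.mem_Icc]
            exact ⟨⟨by omega, by omega⟩, hcon⟩)
        have h3 : clen ℓ B j ≤ clen ℓ B (j - 1) := clen_anti ℓ B (by omega)
        omega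
    obtain ⟨hY, hL⟩ := transpose_good hB hi1 hj1 hjlam
      (fun a ha => clen_iff hB hj1 ha) (clen_le ℓ B j) hAj hB4
      (fun h2i => by
        rcases hcase with h | h
        · omega
        · exact h)
    exact ⟨(i, j), (hmem i j).2 ⟨hj1, hjlam⟩, hY, hL⟩
end

section
/- For all ℓ, r ≥ 1, all e with 0 ≤ e ≤ ℓr, and every k ≥ 0, there exists a bipartite graph B with a fixed bipartition into parts X and Y of sizes ℓ and r and exactly e edges that minimizes m_k over all bipartite graphs with these part sizes and e edges, and whose open neighborhoods { N_B(u) : u ∈ X } are linearly ordered by inclusion (i.e., B is threshold bipartite). -/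
open Classical

/-- A graph on `Fin ℓ ⊕ Fin r` is bipartite with respect to the bipartition
`(Fin ℓ, Fin r)` when all its edges go between the two parts. -/
def IsBipartition {ℓ r : ℕ} (G : SimpleGraph (Fin ℓ ⊕ Fin r)) : Prop :=
  ∀ x y, G.Adj x y → (x.isLeft ∧ y.isRight) ∨ (x.isRight ∧ y.isLeft)

namespace ThreshAux

/-- The bipartite graph determined by a left-neighborhood function. -/
def graphOf {ℓ r : ℕ} (f : Fin ℓ → Finset (Fin r)) : SimpleGraph (Fin ℓ ⊕ Fin r) where
  Adj x y := match x, y with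
    | .inl u, .inr a => a ∈ f u
    | .inr a, .inl u => a ∈ f u
    | _, _ => False
  symm := ⟨by rintro (u|a) (u'|a') h <;> simp_all⟩
  loopless := ⟨by rintro (u|a) h <;> simp_all⟩

variable {ℓ r : ℕ} {f : Fin ℓ → Finset (Fin r)}

@[simp] lemma adj_inl_inr {u a} : (graphOf f).Adj (.inl u) (.inr a) ↔ a ∈ f u := Iff.rfl
@[simp] lemma adj_inl_inl {u u'} : ¬ (graphOf f).Adj (.inl u) (.inl u') := id
@[simp] lemma adj_inr_inr {a a'} : ¬ (graphOf f).Adj (.inr a) (.inr a') := id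
@[simp] lemma adj_inr_inl {u a} : (graphOf f).Adj (.inr a) (.inl u) ↔ a ∈ f u := Iff.rfl

lemma isBip : IsBipartition (graphOf f) := by
  rintro (u|a) (u'|a') h <;> simp_all

def enc (p : Fin ℓ × Fin r) : Sym2 (Fin ℓ ⊕ Fin r) := s(.inl p.1, .inr p.2)

lemma enc_inj : Function.Injective (enc (ℓ := ℓ) (r := r)) := by
  rintro ⟨u, a⟩ ⟨u', a'⟩ h
  simp only [enc, Sym2.eq_iff] at h
  rcases h with ⟨h1, h2⟩ | ⟨h1, h2⟩ <;> simp_all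

lemma mem_edgeFinset_iff {e : Sym2 (Fin ℓ ⊕ Fin r)} :
    e ∈ (graphOf f).edgeFinset ↔ ∃ p : Fin ℓ × Fin r, p.2 ∈ f p.1 ∧ e = enc p := by
  induction e using Sym2.inductionOn with
  | hf x y =>
    rw [SimpleGraph.mem_edgeFinset, SimpleGraph.mem_edgeSet]
    constructor
    · rcases x with u | a <;> rcases y with u' | a' <;> intro h
      · exact absurd h adj_inl_inl
      · exact ⟨(u, a'), h, rfl⟩
      · exact ⟨(u', a), h, by simp [enc, Sym2.eq_swap]⟩
      · exact absurd h adj_inr_inr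
    · rintro ⟨⟨u, a⟩, hp, he⟩
      simp only [enc, Sym2.eq_iff] at he
      rcases he with ⟨h1, h2⟩ | ⟨h1, h2⟩ <;> subst h1 <;> subst h2 <;> simpa

@[simp] lemma mem_enc_left {u : Fin ℓ} {p : Fin ℓ × Fin r} :
    (Sum.inl u : Fin ℓ ⊕ Fin r) ∈ enc p ↔ u = p.1 := by simp [enc]

@[simp] lemma mem_enc_right {a : Fin r} {p : Fin ℓ × Fin r} :
    (Sum.inr a : Fin ℓ ⊕ Fin r) ∈ enc p ↔ a = p.2 := by simp [enc]

lemma edgeFinset_eq :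
    (graphOf f).edgeFinset =
    ((Finset.univ : Finset (Fin ℓ × Fin r)).filter fun p => p.2 ∈ f p.1).image enc := by
  ext e
  simp only [Finset.mem_image, Finset.mem_filter, Finset.mem_univ, true_and, mem_edgeFinset_iff]
  exact ⟨fun ⟨p, h, he⟩ => ⟨p, h, he.symm⟩, fun ⟨p, h, he⟩ => ⟨p, h, he.symm⟩⟩

lemma ncard_edgeSet : (graphOf f).edgeSet.ncard = ∑ u, (f u).card := by
  rw [Set.ncard_eq_toFinset_card', ← SimpleGraph.edgeFinset]
  rw [edgeFinset_eq, Finset.card_image_of_injective _ enc_inj]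
  rw [Finset.card_filter, Fintype.sum_prod_type]
  simp [Finset.card_filter]

/-- Pair-level matchings of size `k`. -/
noncomputable def pairM (f : Fin ℓ → Finset (Fin r)) (k : ℕ) : Finset (Finset (Fin ℓ × Fin r)) :=
  (Finset.univ : Finset (Finset (Fin ℓ × Fin r))).filter fun M =>
    M.card = k ∧ (∀ p ∈ M, p.2 ∈ f p.1) ∧
      ∀ p ∈ M, ∀ q ∈ M, p ≠ q → p.1 ≠ q.1 ∧ p.2 ≠ q.2

lemma mem_pairM {M : Finset (Fin ℓ × Fin r)} {k : ℕ} :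
    M ∈ pairM f k ↔ M.card = k ∧ (∀ p ∈ M, p.2 ∈ f p.1) ∧
      ∀ p ∈ M, ∀ q ∈ M, p ≠ q → p.1 ≠ q.1 ∧ p.2 ≠ q.2 := by
  simp [pairM]

lemma mkCount_eq (k : ℕ) : mkCount (graphOf f) k = (pairM f k).card := by
  rw [mkCount]
  apply Finset.card_bij' (fun M _ => Finset.univ.filter fun p : Fin ℓ × Fin r => enc p ∈ M)
    (fun N _ => N.image enc)
  · intro M hM
    simp only [Finset.mem_filter, graphMatchings, Finset.mem_powerset] at hM
    obtain ⟨⟨hsub, hdisj⟩, hcard⟩ := hM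
    rw [mem_pairM]
    refine ⟨?_, ?_, ?_⟩
    · rw [← hcard]
      apply Finset.card_bij (fun p _ => enc p)
      · intro p hp; simp only [Finset.mem_filter] at hp; exact hp.2
      · intro p hp q hq h; exact enc_inj h
      · intro e he
        obtain ⟨p, hp, rfl⟩ := mem_edgeFinset_iff.mp (hsub he)
        exact ⟨p, by simp [he], rfl⟩
    · intro p hp
      simp only [Finset.mem_filter, Finset.mem_univ, true_and] at hp
      obtain ⟨q, hq, he⟩ := mem_edgeFinset_iff.mp (hsub hp)
      obtain rfl := enc_inj he.symm
      exact hq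
    · intro p hp q hq hpq
      simp only [Finset.mem_filter, Finset.mem_univ, true_and] at hp hq
      have hne : enc p ≠ enc q := fun h => hpq (enc_inj h)
      constructor
      · intro h
        exact hdisj _ hp _ hq hne (.inl p.1) (by simp) (by simp [h])
      · intro h
        exact hdisj _ hp _ hq hne (.inr p.2) (by simp) (by simp [h])
  · intro N hN
    rw [mem_pairM] at hN
    obtain ⟨hcard, hval, hdisj⟩ := hN
    simp only [Finset.mem_filter, graphMatchings, Finset.mem_powerset]
    refine ⟨⟨?_, ?_⟩, ?_⟩
    · intro e he
      simp only [Finset.mem_image] at he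
      obtain ⟨p, hp, rfl⟩ := he
      exact mem_edgeFinset_iff.mpr ⟨p, hval p hp, rfl⟩
    · intro e he e' he' hne v hv hv'
      simp only [Finset.mem_image] at he he'
      obtain ⟨p, hp, rfl⟩ := he
      obtain ⟨q, hq, rfl⟩ := he'
      have hpq : p ≠ q := fun h => hne (by rw [h])
      obtain ⟨h1, h2⟩ := hdisj p hp q hq hpq
      rcases v with u | a
      · simp only [mem_enc_left] at hv hv'; exact h1 (hv ▸ hv' ▸ rfl)
      · simp only [mem_enc_right] at hv hv'; exact h2 (hv ▸ hv' ▸ rfl)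
    · rw [Finset.card_image_of_injective _ enc_inj]; exact hcard
  · intro M hM
    simp only [Finset.mem_filter, graphMatchings, Finset.mem_powerset] at hM
    obtain ⟨⟨hsub, _⟩, _⟩ := hM
    ext e
    simp only [Finset.mem_image, Finset.mem_filter, Finset.mem_univ, true_and]
    constructor
    · rintro ⟨p, hp, rfl⟩; exact hp
    · intro he
      obtain ⟨p, hp, rfl⟩ := mem_edgeFinset_iff.mp (hsub he)
      exact ⟨p, he, rfl⟩
  · intro N hN
    ext p
    simp only [Finset.mem_filter, Finset.mem_univ, true_and, Finset.mem_image]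
    constructor
    · rintro ⟨q, hq, he⟩; obtain rfl := enc_inj he; exact hq
    · intro hp; exact ⟨p, hp, rfl⟩

/-! ### Compression -/

noncomputable def compress (f : Fin ℓ → Finset (Fin r)) (u v : Fin ℓ) : Fin ℓ → Finset (Fin r) :=
  Function.update (Function.update f u (f u ∪ f v)) v (f u ∩ f v)

variable {u v : Fin ℓ}

lemma compress_u (huv : u ≠ v) : compress f u v u = f u ∪ f v := by
  simp [compress, Function.update_of_ne huv]

lemma compress_v : compress f u v v = f u ∩ f v := by simp [compress]

lemma compress_other {w : Fin ℓ} (hwu : w ≠ u) (hwv : w ≠ v) : compress f u v w = f w := by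
  simp [compress, Function.update_of_ne hwv, Function.update_of_ne hwu]

lemma compress_sum (huv : u ≠ v) :
    ∑ w, (compress f u v w).card = ∑ w, (f w).card := by
  have h1 : ∑ w, (compress f u v w).card
      = (f u ∩ f v).card + ∑ w ∈ Finset.univ.erase v, (compress f u v w).card := by
    rw [← Finset.add_sum_erase _ _ (Finset.mem_univ v), compress_v]
  have h2 : ∑ w ∈ Finset.univ.erase v, (compress f u v w).card
      = (f u ∪ f v).card + ∑ w ∈ (Finset.univ.erase v).erase u, (compress f u v w).card := by
    rw [← Finset.add_sum_erase _ _ (Finset.mem_erase.mpr ⟨huv, Finset.mem_univ u⟩),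
      compress_u huv]
  have h3 : ∑ w ∈ (Finset.univ.erase v).erase u, (compress f u v w).card
      = ∑ w ∈ (Finset.univ.erase v).erase u, (f w).card := by
    apply Finset.sum_congr rfl
    intro w hw
    simp only [Finset.mem_erase] at hw
    rw [compress_other hw.1 hw.2.1]
  have h4 : ∑ w, (f w).card
      = (f u ∩ f v).card + ((f u ∪ f v).card + ∑ w ∈ (Finset.univ.erase v).erase u, (f w).card) := by
    rw [← Finset.add_sum_erase _ _ (Finset.mem_univ v),
      ← Finset.add_sum_erase _ _ (Finset.mem_erase.mpr ⟨huv, Finset.mem_univ u⟩)]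
    have := Finset.card_inter_add_card_union (f u) (f v)
    omega
  omega

lemma compress_sum_sq (huv : u ≠ v) (h1 : ¬ f u ⊆ f v) (h2 : ¬ f v ⊆ f u) :
    ∑ w, (f w).card ^ 2 < ∑ w, (compress f u v w).card ^ 2 := by
  have hA : ∑ w, (compress f u v w).card ^ 2
      = (f u ∩ f v).card ^ 2 + ((f u ∪ f v).card ^ 2
        + ∑ w ∈ (Finset.univ.erase v).erase u, (compress f u v w).card ^ 2) := by
    rw [← Finset.add_sum_erase _ _ (Finset.mem_univ v),
      ← Finset.add_sum_erase _ _ (Finset.mem_erase.mpr ⟨huv, Finset.mem_univ u⟩),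
      compress_u huv, compress_v]
  have hA' : ∑ w ∈ (Finset.univ.erase v).erase u, (compress f u v w).card ^ 2
      = ∑ w ∈ (Finset.univ.erase v).erase u, (f w).card ^ 2 := by
    apply Finset.sum_congr rfl
    intro w hw
    simp only [Finset.mem_erase] at hw
    rw [compress_other hw.1 hw.2.1]
  have hB : ∑ w, (f w).card ^ 2
      = (f v).card ^ 2 + ((f u).card ^ 2
        + ∑ w ∈ (Finset.univ.erase v).erase u, (f w).card ^ 2) := by
    rw [← Finset.add_sum_erase _ _ (Finset.mem_univ v),
      ← Finset.add_sum_erase _ _ (Finset.mem_erase.mpr ⟨huv, Finset.mem_univ u⟩)]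
  have key : (f u).card ^ 2 + (f v).card ^ 2
      < (f u ∪ f v).card ^ 2 + (f u ∩ f v).card ^ 2 := by
    have hia : (f u ∩ f v).card < (f u).card := by
      apply Finset.card_lt_card
      constructor
      · exact Finset.inter_subset_left
      · intro hsub
        exact h1 fun x hx => (Finset.mem_inter.mp (hsub (by simpa using hx))).2
    have hib : (f u ∩ f v).card < (f v).card := by
      apply Finset.card_lt_card
      constructor
      · exact Finset.inter_subset_right
      · intro hsub
        exact h2 fun x hx => (Finset.mem_inter.mp (hsub (by simpa using hx))).1
    have hsum := Finset.card_inter_add_card_union (f u) (f v)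
    nlinarith [hsum, hia, hib]
  rw [hA, hA']
  omega

/-- the swap on pairs -/
def tau (u v : Fin ℓ) (p : Fin ℓ × Fin r) : Fin ℓ × Fin r := (Equiv.swap u v p.1, p.2)

lemma tau_inj : Function.Injective (tau (r := r) u v) := by
  rintro ⟨a, b⟩ ⟨c, d⟩ h
  simp only [tau, Prod.mk.injEq] at h
  obtain ⟨h1, h2⟩ := h
  exact Prod.ext ((Equiv.swap u v).injective h1) h2

lemma compress_pairM_le (huv : u ≠ v) (k : ℕ) :
    (pairM (compress f u v) k).card ≤ (pairM f k).card := by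
  set g := compress f u v with hg
  set Ψ : Finset (Fin ℓ × Fin r) → Finset (Fin ℓ × Fin r) :=
    fun M => if ∃ p ∈ M, p.1 = u ∧ p.2 ∉ f u then M.image (tau u v) else M with hΨ
  apply Finset.card_le_card_of_injOn Ψ
  · intro M hM
    rw [Finset.mem_coe, mem_pairM] at hM ⊢
    obtain ⟨hcard, hval, hdisj⟩ := hM
    by_cases hc : ∃ p ∈ M, p.1 = u ∧ p.2 ∉ f u
    · simp only [hΨ, if_pos hc]
      obtain ⟨p₀, hp₀, hp₀u, hp₀f⟩ := hc
      refine ⟨?_, ?_, ?_⟩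
      · rw [Finset.card_image_of_injective _ tau_inj]; exact hcard
      · intro q hq
        simp only [Finset.mem_image] at hq
        obtain ⟨p, hp, rfl⟩ := hq
        rcases eq_or_ne p.1 u with h | h
        · have : p = p₀ := by
            by_contra hne
            exact (hdisj p hp p₀ hp₀ hne).1 (h.trans hp₀u.symm)
          subst this
          have : p.2 ∈ g p.1 := hval p hp
          rw [h, hg, compress_u huv] at this
          have h2 : p.2 ∈ f v := by
            rcases Finset.mem_union.mp this with h' | h'
            · exact absurd h' hp₀f
            · exact h'
          simpa [tau, h, Equiv.swap_apply_left]
        · rcases eq_or_ne p.1 v with h' | h'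
          · have : p.2 ∈ g p.1 := hval p hp
            rw [h', hg, compress_v] at this
            have := Finset.mem_inter.mp this
            simpa [tau, h', Equiv.swap_apply_right] using this.1
          · have : p.2 ∈ g p.1 := hval p hp
            rw [hg, compress_other h h'] at this
            simpa [tau, Equiv.swap_apply_of_ne_of_ne h h']
      · intro p hp q hq hpq
        simp only [Finset.mem_image] at hp hq
        obtain ⟨p', hp', rfl⟩ := hp
        obtain ⟨q', hq', rfl⟩ := hq
        have h' : p' ≠ q' := fun h => hpq (by rw [h])
        obtain ⟨h1, h2⟩ := hdisj p' hp' q' hq' h'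
        exact ⟨by simpa [tau] using (Equiv.swap u v).injective.ne h1, by simpa [tau] using h2⟩
    · simp only [hΨ, if_neg hc]
      push_neg at hc
      refine ⟨hcard, ?_, hdisj⟩
      intro p hp
      rcases eq_or_ne p.1 u with h | h
      · rw [h]; exact hc p hp h
      · rcases eq_or_ne p.1 v with h' | h'
        · have := hval p hp
          rw [hg, h', compress_v] at this
          exact h' ▸ (Finset.mem_inter.mp this).2
        · have := hval p hp
          rwa [hg, compress_other h h'] at this
  · intro M₁ hM₁ M₂ hM₂ hEq
    rw [Finset.mem_coe, mem_pairM] at hM₁ hM₂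
    simp only [hΨ] at hEq
    by_cases h1 : ∃ p ∈ M₁, p.1 = u ∧ p.2 ∉ f u <;>
      by_cases h2 : ∃ p ∈ M₂, p.1 = u ∧ p.2 ∉ f u
    · rw [if_pos h1, if_pos h2] at hEq
      exact Finset.image_injective tau_inj hEq
    · rw [if_pos h1, if_neg h2] at hEq
      exfalso
      obtain ⟨p₀, hp₀, hu, hf⟩ := h1
      have : tau u v p₀ ∈ M₂ := hEq ▸ Finset.mem_image_of_mem _ hp₀
      have hval := hM₂.2.1 _ this
      simp only [tau, hu, Equiv.swap_apply_left] at hval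
      rw [hg, compress_v] at hval
      exact hf (Finset.mem_inter.mp hval).1
    · rw [if_neg h1, if_pos h2] at hEq
      exfalso
      obtain ⟨p₀, hp₀, hu, hf⟩ := h2
      have : tau u v p₀ ∈ M₁ := hEq.symm ▸ Finset.mem_image_of_mem _ hp₀
      have hval := hM₁.2.1 _ this
      simp only [tau, hu, Equiv.swap_apply_left] at hval
      rw [hg, compress_v] at hval
      exact hf (Finset.mem_inter.mp hval).1
    · rw [if_neg h1, if_neg h2] at hEq
      exact hEq

/-! ### Existence of a function with prescribed edge count -/

lemma exists_fun (e : ℕ) (he : e ≤ ℓ * r) :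
    ∃ f : Fin ℓ → Finset (Fin r), ∑ u, (f u).card = e := by
  induction e with
  | zero => exact ⟨fun _ => ∅, by simp⟩
  | succ e ih =>
    obtain ⟨f, hf⟩ := ih (Nat.le_of_succ_le he)
    have hlt : ∃ u, (f u).card < r := by
      by_contra h
      push_neg at h
      have : ℓ * r ≤ ∑ u, (f u).card := by
        calc ℓ * r = ∑ _u : Fin ℓ, r := by simp [mul_comm]
        _ ≤ ∑ u, (f u).card := Finset.sum_le_sum fun u _ => h u
      omega
    obtain ⟨u, hu⟩ := hlt
    have : ∃ a : Fin r, a ∉ f u := by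
      by_contra h
      push_neg at h
      have : (Finset.univ : Finset (Fin r)).card ≤ (f u).card :=
        Finset.card_le_card fun a _ => h a
      simp at this
      omega
    obtain ⟨a, ha⟩ := this
    refine ⟨Function.update f u (insert a (f u)), ?_⟩
    have h1 : ∑ w, (Function.update f u (insert a (f u)) w).card
        = (insert a (f u)).card + ∑ w ∈ Finset.univ.erase u, (f w).card := by
      rw [← Finset.add_sum_erase _ _ (Finset.mem_univ u), Function.update_self]
      congr 1
      apply Finset.sum_congr rfl
      intro w hw
      rw [Function.update_of_ne (Finset.mem_erase.mp hw).1]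
    have h2 : ∑ w, (f w).card = (f u).card + ∑ w ∈ Finset.univ.erase u, (f w).card :=
      (Finset.add_sum_erase _ _ (Finset.mem_univ u)).symm
    rw [h1, Finset.card_insert_of_notMem ha]
    omega

/-! ### Every bipartition graph is of the form `graphOf` -/

noncomputable def nbhd (B : SimpleGraph (Fin ℓ ⊕ Fin r)) (u : Fin ℓ) : Finset (Fin r) :=
  Finset.univ.filter fun a => B.Adj (.inl u) (.inr a)

lemma graphOf_nbhd {B : SimpleGraph (Fin ℓ ⊕ Fin r)} (hB : IsBipartition B) :
    graphOf (nbhd B) = B := by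
  ext x y
  rcases x with u | a <;> rcases y with u' | a'
  · simp only [adj_inl_inl]
    constructor
    · exact fun h => absurd h id
    · intro h
      rcases hB _ _ h with ⟨_, h2⟩ | ⟨h1, _⟩ <;> simp_all
  · simp [nbhd]
  · simp only [adj_inr_inl]
    rw [nbhd]
    simp only [Finset.mem_filter, Finset.mem_univ, true_and]
    exact ⟨fun h => h.symm, fun h => h.symm⟩
  · simp only [adj_inr_inr]
    constructor
    · exact fun h => absurd h id
    · intro h
      rcases hB _ _ h with ⟨h1, _⟩ | ⟨_, h2⟩ <;> simp_all

end ThreshAux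

open ThreshAux in
/-- For all `ℓ, r ≥ 1`, `0 ≤ e ≤ ℓr`, and every `k ≥ 0`, there is a bipartite graph with
parts of sizes `ℓ` and `r` and exactly `e` edges that minimizes `m_k` over all bipartite
graphs with these part sizes and `e` edges, and that is threshold bipartite: the open
neighborhoods of the left-part vertices are linearly ordered by inclusion. -/
theorem exists_threshold_bipartite_minimizer (ℓ r e k : ℕ) (hl : 1 ≤ ℓ) (hr : 1 ≤ r)
    (he : e ≤ ℓ * r) :
    ∃ B : SimpleGraph (Fin ℓ ⊕ Fin r), IsBipartition B ∧ B.edgeSet.ncard = e ∧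
      (∀ B' : SimpleGraph (Fin ℓ ⊕ Fin r), IsBipartition B' → B'.edgeSet.ncard = e →
        mkCount B k ≤ mkCount B' k) ∧
      (∀ u v : Fin ℓ, B.neighborSet (Sum.inl u) ⊆ B.neighborSet (Sum.inl v) ∨
        B.neighborSet (Sum.inl v) ⊆ B.neighborSet (Sum.inl u)) := by
  classical
  -- the finite set of neighborhood functions with `e` edges
  set T : Finset (Fin ℓ → Finset (Fin r)) :=
    Finset.univ.filter (fun f => ∑ u, (f u).card = e) with hT
  obtain ⟨f₀, hf₀⟩ := exists_fun (ℓ := ℓ) (r := r) e he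
  have hTne : T.Nonempty := ⟨f₀, by simp [hT, hf₀]⟩
  -- a minimizer of m_k
  obtain ⟨f₁, hf₁T, hf₁min⟩ := T.exists_min_image (fun g => (pairM g k).card) hTne
  -- among minimizers, maximize the sum of squared degrees
  set T' : Finset (Fin ℓ → Finset (Fin r)) :=
    T.filter (fun g => (pairM g k).card = (pairM f₁ k).card) with hT'
  have hT'ne : T'.Nonempty := ⟨f₁, by simp [hT', hf₁T]⟩
  obtain ⟨f, hfT', hfmax⟩ := T'.exists_max_image (fun g => ∑ u, (g u).card ^ 2) hT'ne
  have hfT : f ∈ T := (Finset.mem_filter.mp hfT').1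
  have hfmk : (pairM f k).card = (pairM f₁ k).card := (Finset.mem_filter.mp hfT').2
  have hfe : ∑ u, (f u).card = e := by
    have := Finset.mem_filter.mp hfT
    exact this.2
  -- the chosen f has comparable neighborhoods
  have hthresh : ∀ u v : Fin ℓ, f u ⊆ f v ∨ f v ⊆ f u := by
    intro u v
    by_contra hcon
    push_neg at hcon
    obtain ⟨h1, h2⟩ := hcon
    have huv : u ≠ v := by rintro rfl; exact h1 (le_refl _)
    set g := compress f u v with hg
    have hgT : g ∈ T := by
      simp only [hT, Finset.mem_filter, Finset.mem_univ, true_and]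
      rw [hg, compress_sum huv, hfe]
    have hle : (pairM g k).card ≤ (pairM f k).card := compress_pairM_le huv k
    have hge : (pairM f₁ k).card ≤ (pairM g k).card := hf₁min g hgT
    have hgT' : g ∈ T' := by
      simp only [hT', Finset.mem_filter]
      exact ⟨hgT, le_antisymm (hfmk ▸ hle) hge⟩
    have hsq : ∑ u, (f u).card ^ 2 < ∑ u, (g u).card ^ 2 := compress_sum_sq huv h1 h2
    exact absurd (hfmax g hgT') (not_le.mpr hsq)
  refine ⟨graphOf f, isBip, ?_, ?_, ?_⟩
  · rw [ncard_edgeSet, hfe]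
  · intro B' hB' hB'e
    have hEq : graphOf (nbhd B') = B' := graphOf_nbhd hB'
    have hgT : nbhd B' ∈ T := by
      simp only [hT, Finset.mem_filter, Finset.mem_univ, true_and]
      rw [← ncard_edgeSet, hEq, hB'e]
    rw [mkCount_eq, ← hEq, mkCount_eq]
    exact hfmk ▸ hf₁min _ hgT
  · intro u v
    rcases hthresh u v with h | h
    · left
      intro x hx
      rw [SimpleGraph.mem_neighborSet] at hx ⊢
      rcases x with u' | a
      · exact absurd hx adj_inl_inl
      · exact h hx
    · right
      intro x hx
      rw [SimpleGraph.mem_neighborSet] at hx ⊢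
      rcases x with u' | a
      · exact absurd hx adj_inl_inl
      · exact h hx
end
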